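/- arXiv:1510.06278 — 11 statements merged into one kernel-verified Lean document; each statement's English description precedes it below -/
import Mathlib

section
/- Let D be a nonprincipal ultrafilter on an infinite cardinal κ, let J_* be a λ⁺-saturated dense linear order without endpoints, and let J be a linear order containing J_* such that J_* is dense in J (between any two distinct elements of J there is an element of J_*). Suppose θ and σ are infinite cardinals with θ, σ ≤ λ, and the sequences ⟨f_α : α < θ⟩ and ⟨g_β : β < σ⟩ of functions from κ to J_* represent a (θ, σ)-cut of J_*^κ/D. Then there is no h : κ → J with f_α <_D h <_D g_β for all α < θ and β < σ; that is, the cut is not filled in J^κ/D. -/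
open Cardinal Set

/-- `f <_D g` : the set of coordinates where `f i < g i` belongs to the ultrafilter `D`. -/
def ltD {ι J : Type} [LinearOrder J] (D : Ultrafilter ι) (f g : ι → J) : Prop :=
  {i | f i < g i} ∈ D

/-- An ultrafilter is nonprincipal iff it contains the complement of every singleton. -/
def Nonprincipal {ι : Type} (D : Ultrafilter ι) : Prop :=
  ∀ i : ι, ({i}ᶜ : Set ι) ∈ D

/-- `μ`-completeness: any intersection of fewer than `μ` members of `D` belongs to `D`. -/
def IsCompleteUF (μ : Cardinal) {ι : Type} (D : Ultrafilter ι) : Prop :=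
  ∀ s : Set (Set ι), #s < μ → (∀ A ∈ s, A ∈ D) → ⋂₀ s ∈ D

/-- A uniform ultrafilter: every member has full cardinality. -/
def IsUniformUF {ι : Type} (D : Ultrafilter ι) : Prop :=
  ∀ A ∈ D, #A = #ι

/-- The sequences `f` (indexed by `T₁`) and `g` (indexed by `T₂`) represent a
`(T₁, T₂)`-cut of the ultrapower `J^ι/D`: `f` is `<_D`-increasing, `g` is `<_D`-decreasing,
every `f a` is `<_D`-below every `g b`, and no element fills the cut. -/
def RepCut {ι J : Type} [LinearOrder J] {T₁ T₂ : Type} [LinearOrder T₁] [LinearOrder T₂]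
    (D : Ultrafilter ι) (f : T₁ → ι → J) (g : T₂ → ι → J) : Prop :=
  (∀ a b : T₁, a < b → ltD D (f a) (f b)) ∧
  (∀ a b : T₂, a < b → ltD D (g b) (g a)) ∧
  (∀ (a : T₁) (b : T₂), ltD D (f a) (g b)) ∧
  ¬∃ h : ι → J, (∀ a : T₁, ltD D (f a) h) ∧ ∀ b : T₂, ltD D h (g b)

/-- `τ⁺`-saturation of a dense linear order: any two sets of size `≤ τ`, one entirely
below the other, can be separated by a point. -/
def SatPlus (τ : Cardinal) (J : Type) [LinearOrder J] : Prop :=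
  ∀ A B : Set J, #A ≤ τ → #B ≤ τ → (∀ a ∈ A, ∀ b ∈ B, a < b) →
    ∃ t : J, (∀ a ∈ A, a < t) ∧ ∀ b ∈ B, t < b

/-- a cut of `J_*^κ/D` with both cofinalities `≤ λ`, where `J_*` is a
`λ⁺`-saturated dense linear order without endpoints sitting densely inside the linear
order `J`, is not filled in `J^κ/D`. -/
theorem cut_not_filled_in_completion
    {ι : Type} [Infinite ι] (D : Ultrafilter ι) (hD : Nonprincipal D)
    (lam : Cardinal) (J : Type) [LinearOrder J] (Jstar : Set J)
    (hne : Jstar.Nonempty)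
    (hdense : ∀ a ∈ Jstar, ∀ b ∈ Jstar, a < b → ∃ c ∈ Jstar, a < c ∧ c < b)
    (hnomin : ∀ a ∈ Jstar, ∃ b ∈ Jstar, b < a)
    (hnomax : ∀ a ∈ Jstar, ∃ b ∈ Jstar, a < b)
    (hsat : ∀ A B : Set J, A ⊆ Jstar → B ⊆ Jstar → #A ≤ lam → #B ≤ lam →
      (∀ a ∈ A, ∀ b ∈ B, a < b) →
      ∃ t ∈ Jstar, (∀ a ∈ A, a < t) ∧ ∀ b ∈ B, t < b)
    (hJdense : ∀ a b : J, a < b → ∃ s ∈ Jstar, a < s ∧ s < b)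
    (θ σ : Cardinal) (hθ : ℵ₀ ≤ θ) (hσ : ℵ₀ ≤ σ) (hθlam : θ ≤ lam) (hσlam : σ ≤ lam)
    (f : θ.ord.ToType → ι → J) (g : σ.ord.ToType → ι → J)
    (hfJ : ∀ a i, f a i ∈ Jstar) (hgJ : ∀ b i, g b i ∈ Jstar)
    (hinc : ∀ a b, a < b → ltD D (f a) (f b))
    (hdec : ∀ a b, a < b → ltD D (g b) (g a))
    (hbet : ∀ a b, ltD D (f a) (g b))
    (hnofillstar : ¬∃ h : ι → J, (∀ i, h i ∈ Jstar) ∧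
      (∀ a, ltD D (f a) h) ∧ ∀ b, ltD D h (g b)) :
    ¬∃ h : ι → J, (∀ a, ltD D (f a) h) ∧ ∀ b, ltD D h (g b) := by
  rintro ⟨h, hf, hg⟩
  apply hnofillstar
  have key : ∀ i : ι, ∃ t ∈ Jstar,
      (∀ a, f a i < h i → f a i < t) ∧ (∀ b, h i < g b i → t < g b i) := by
    intro i
    obtain ⟨t, ht, hA, hB⟩ := hsat ((fun a => f a i) '' {a | f a i < h i})
      ((fun b => g b i) '' {b | h i < g b i})
      (by rintro x ⟨a, -, rfl⟩; exact hfJ a i)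
      (by rintro x ⟨b, -, rfl⟩; exact hgJ b i)
      ((Cardinal.mk_image_le.trans (Cardinal.mk_set_le _)).trans
        (by rw [Cardinal.mk_ord_toType]; exact hθlam))
      ((Cardinal.mk_image_le.trans (Cardinal.mk_set_le _)).trans
        (by rw [Cardinal.mk_ord_toType]; exact hσlam))
      (by rintro x ⟨a, ha, rfl⟩ y ⟨b, hb, rfl⟩; exact lt_trans ha hb)
    exact ⟨t, ht, fun a ha => hA _ ⟨a, ha, rfl⟩, fun b hb => hB _ ⟨b, hb, rfl⟩⟩
  choose t htJ htA htB using key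
  refine ⟨t, htJ, fun a => ?_, fun b => ?_⟩
  · exact Filter.mem_of_superset (hf a) fun i hi => htA i a hi
  · exact Filter.mem_of_superset (hg b) fun i hi => htB i b hi
end

section
/- Suppose κ₁ > ℵ₀ and D is a κ₁-complete but not κ₁⁺-complete nonprincipal ultrafilter on a cardinal κ₂. Let θ₁, θ₂ be regular cardinals, let J be a (θ₁+θ₂)⁺-saturated dense linear order without endpoints, and suppose some pair of sequences ⟨f_α : α < θ₁⟩, ⟨g_β : β < θ₂⟩ of functions from κ₂ to J represents a (θ₁, θ₂)-cut of J^{κ₂}/D. Then θ₁ > κ₁ and θ₂ > κ₁. -/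
open Cardinal Set

instance auxIWO (o : Ordinal) : IsWellOrder o.ToType (· < ·) := isWellOrder_lt

/-- The ordinal rank of an element of `o.toType`. -/
noncomputable def auxTin {o : Ordinal} (a : o.ToType) : Ordinal :=
  Ordinal.typein (α := o.ToType) (· < ·) a

theorem auxTin_lt {o : Ordinal} (a : o.ToType) : auxTin a < o := Ordinal.typein_lt_self a

theorem auxTin_surj {o e : Ordinal} (h : e < o) : ∃ a : o.ToType, auxTin a = e := by
  apply Ordinal.typein_surj
  rwa [Ordinal.type_toType]

theorem auxTin_inj {o : Ordinal} {a b : o.ToType} (h : auxTin a = auxTin b) : a = b :=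
  Ordinal.typein_injective _ h

theorem auxTin_lt_tin {o : Ordinal} {a b : o.ToType} (h : auxTin a < auxTin b) : a < b :=
  (Ordinal.typein_lt_typein _).1 h

/-- Step 1: there is a function to the ordinals which exceeds every constant below
`κ₁.ord` modulo `D`. -/
theorem aux_exists_unbounded {ι : Type} {κ₁ : Cardinal} (hκ₁ : ℵ₀ < κ₁) {D : Ultrafilter ι}
    (hcomp : IsCompleteUF κ₁ D) (hncomp : ¬IsCompleteUF (Order.succ κ₁) D) :
    ∃ r : ι → Ordinal, ∀ ε < κ₁.ord, {i | ε ≤ r i} ∈ D := by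
  rw [IsCompleteUF] at hncomp
  push_neg at hncomp
  obtain ⟨s, hscard, hsmem, hsnot⟩ := hncomp
  have hsle : #↥s ≤ κ₁ := Order.lt_succ_iff.1 hscard
  have hNc : (⋂₀ s)ᶜ ∈ D := Ultrafilter.compl_mem_iff_notMem.2 hsnot
  -- s is nonempty
  have hsne : Nonempty ↥s := by
    by_contra hne
    rw [not_nonempty_iff] at hne
    apply hsnot
    have : s = ∅ := by
      ext A; exact ⟨fun hA => (hne.false ⟨A, hA⟩).elim, fun h => h.elim⟩
    rw [this, Set.sInter_empty]
    exact Filter.univ_mem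
  -- a surjection from κ₁.ord.toType onto s
  have hle2 : #↥s ≤ #(κ₁.ord.ToType) := by
    rwa [Cardinal.mk_toType, Cardinal.card_ord]
  obtain ⟨e⟩ := Cardinal.le_def _ _ |>.1 hle2
  set G : κ₁.ord.ToType → ↥s := Function.invFun e with hG
  have hGsurj : Function.Surjective G := Function.invFun_surjective e.injective
  -- the decreasing family
  set X : κ₁.ord.ToType → Set ι :=
    fun a => (⋂ b ∈ Set.Iic a, ((G b : Set ι))) ∩ (⋂₀ s)ᶜ with hX
  have hXmem : ∀ a, X a ∈ D := by
    intro a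
    apply Filter.inter_mem _ hNc
    have hint : (⋂ b ∈ Set.Iic a, ((G b : Set ι)))
        = ⋂₀ (Set.range (fun b : ↥(Set.Iic a) => ((G (b : κ₁.ord.ToType) : Set ι)))) := by
      rw [Set.sInter_range, Set.biInter_eq_iInter]
    rw [hint]
    apply hcomp
    · refine lt_of_le_of_lt Cardinal.mk_range_le ?_
      have hsub : Set.Iic a ⊆ Set.Iio a ∪ {a} := by
        intro x hx
        rcases lt_or_eq_of_le (Set.mem_Iic.1 hx) with h | h
        · exact Or.inl h
        · exact Or.inr h
      have h1 : #↥(Set.Iic a) ≤ #↥(Set.Iio a) + 1 :=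
        (Cardinal.mk_le_mk_of_subset hsub).trans
          ((Cardinal.mk_union_le _ _).trans (by rw [Cardinal.mk_singleton]))
      refine lt_of_le_of_lt h1 ?_
      exact Cardinal.add_lt_of_lt hκ₁.le (Cardinal.mk_Iio_ord_toType a)
        (lt_trans Cardinal.one_lt_aleph0 hκ₁)
    · rintro A ⟨b, rfl⟩
      exact hsmem _ (G ↑b).2
  have hXmono : ∀ a a' : κ₁.ord.ToType, a ≤ a' → X a' ⊆ X a := by
    intro a a' h
    apply Set.inter_subset_inter_left
    exact Set.biInter_subset_biInter_left (Set.Iic_subset_Iic.2 h)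
  -- every i escapes some X a
  have hesc : ∀ i : ι, {a : κ₁.ord.ToType | i ∉ X a}.Nonempty := by
    intro i
    by_contra hne
    rw [Set.not_nonempty_iff_eq_empty] at hne
    have hall : ∀ a, i ∈ X a := by
      intro a
      by_contra h
      rw [Set.eq_empty_iff_forall_notMem] at hne
      exact hne a h
    have hmem : i ∈ ⋂₀ s := by
      intro A hA
      obtain ⟨b, hb⟩ := hGsurj ⟨A, hA⟩
      have h3 := (hall b).1
      simp only [Set.mem_iInter] at h3
      have h2 : i ∈ (G b : Set ι) := h3 b (Set.mem_Iic.2 le_rfl)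
      rw [hb] at h2
      exact h2
    have hpos : (0 : Ordinal) < κ₁.ord := by
      rw [Cardinal.lt_ord, Ordinal.card_zero]
      exact lt_trans Cardinal.aleph0_pos hκ₁
    haveI : Nonempty κ₁.ord.ToType :=
      Ordinal.toType_nonempty_iff_ne_zero.2 hpos.ne'
    exact (hall (Classical.arbitrary _)).2 hmem
  classical
  set aa : ι → κ₁.ord.ToType := fun i => WellFounded.min wellFounded_lt _ (hesc i) with haa
  refine ⟨fun i => auxTin (aa i), ?_⟩
  intro ε hε
  obtain ⟨c, hc⟩ := auxTin_surj hε
  refine Filter.mem_of_superset (hXmem c) ?_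
  intro i hi
  simp only [Set.mem_setOf_eq]
  by_contra hlt
  push_neg at hlt
  rw [← hc] at hlt
  have hac : aa i < c := auxTin_lt_tin hlt
  have : i ∈ X (aa i) := hXmono _ _ hac.le hi
  exact WellFounded.min_mem wellFounded_lt _ (hesc i) this

/-- Step 2: there is a minimal such function. -/
theorem aux_exists_min_unbounded {ι : Type} {κ₁ : Cardinal} (hκ₁ : ℵ₀ < κ₁) {D : Ultrafilter ι}
    (hcomp : IsCompleteUF κ₁ D) (hncomp : ¬IsCompleteUF (Order.succ κ₁) D) :
    ∃ r : ι → Ordinal, (∀ ε < κ₁.ord, {i | ε ≤ r i} ∈ D) ∧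
      ∀ s : ι → Ordinal, (∀ ε < κ₁.ord, {i | ε ≤ s i} ∈ D) → {i | s i < r i} ∉ D := by
  classical
  set P : (ι → Ordinal) → Prop := fun r => ∀ ε < κ₁.ord, {i | ε ≤ r i} ∈ D with hP
  obtain ⟨r₀, hr₀⟩ := aux_exists_unbounded hκ₁ hcomp hncomp
  by_contra hno
  push_neg at hno
  have hstep : ∀ r : ι → Ordinal, P r → ∃ s : ι → Ordinal, P s ∧ {i | s i < r i} ∈ D := by
    intro r hr
    obtain ⟨t, ht, htD⟩ := hno r hr
    exact ⟨t, ht, htD⟩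
  choose F hF1 hF2 using hstep
  set u : ℕ → {r : ι → Ordinal // P r} :=
    fun n => Nat.rec ⟨r₀, hr₀⟩ (fun _ p => ⟨F p.1 p.2, hF1 p.1 p.2⟩) n with hu
  have hCn : ∀ n : ℕ, {i | (u (n + 1)).1 i < (u n).1 i} ∈ D := fun n => hF2 (u n).1 (u n).2
  have hint : (⋂₀ Set.range (fun n : ℕ => {i | (u (n + 1)).1 i < (u n).1 i})) ∈ D := by
    apply hcomp
    · exact lt_of_le_of_lt Cardinal.mk_range_le (by rw [Cardinal.mk_denumerable]; exact hκ₁)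
    · rintro A ⟨n, rfl⟩; exact hCn n
  obtain ⟨i₀, hi₀⟩ := Ultrafilter.nonempty_of_mem hint
  rw [Set.sInter_range, Set.mem_iInter] at hi₀
  set v : ℕ → Ordinal := fun n => (u n).1 i₀ with hv
  have hdec : ∀ n, v (n + 1) < v n := fun n => hi₀ n
  obtain ⟨m, ⟨n, hn⟩, hmin⟩ :=
    Ordinal.lt_wf.has_min (Set.range v) ⟨v 0, Set.mem_range_self 0⟩
  exact hmin (v (n + 1)) (Set.mem_range_self (n + 1)) (hn ▸ hdec n)

/-- Step 3: the diagonal intersection property of a minimal unbounded function. -/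
theorem aux_diag {ι : Type} {κ₁ : Cardinal} (hκ₁ : ℵ₀ < κ₁) {D : Ultrafilter ι}
    (hcomp : IsCompleteUF κ₁ D) {r : ι → Ordinal}
    (hr : ∀ ε < κ₁.ord, {i | ε ≤ r i} ∈ D)
    (hmin : ∀ s : ι → Ordinal, (∀ ε < κ₁.ord, {i | ε ≤ s i} ∈ D) → {i | s i < r i} ∉ D)
    (T : Ordinal → Set ι) (hT : ∀ ε, T ε ∈ D) :
    {i | ∀ ε < r i, i ∈ T ε} ∈ D := by
  classical
  by_contra hE
  have hEc : {i | ∀ ε < r i, i ∈ T ε}ᶜ ∈ D := Ultrafilter.compl_mem_iff_notMem.2 hE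
  have hEc' : {i : ι | ∃ ε, ε < r i ∧ i ∉ T ε} ∈ D := by
    refine Filter.mem_of_superset hEc ?_
    intro i hi
    simp only [Set.mem_compl_iff, Set.mem_setOf_eq, not_forall] at hi
    obtain ⟨ε, hε1, hε2⟩ := hi
    exact ⟨ε, hε1, hε2⟩
  set α : ι → Ordinal := fun i => sInf {ε | ε < r i ∧ i ∉ T ε} with hα
  have hαspec : ∀ i ∈ {i : ι | ∃ ε, ε < r i ∧ i ∉ T ε}, α i < r i ∧ i ∉ T (α i) := by
    intro i hi
    obtain ⟨ε, hε⟩ := hi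
    exact csInf_mem (⟨ε, hε⟩ : {ε | ε < r i ∧ i ∉ T ε}.Nonempty)
  -- α is not unbounded, by minimality of r
  have hαnot : ¬∀ ε < κ₁.ord, {i | ε ≤ α i} ∈ D := by
    intro hαP
    refine hmin α hαP (Filter.mem_of_superset hEc' ?_)
    intro i hi
    exact (hαspec i hi).1
  push_neg at hαnot
  obtain ⟨ε₀, hε₀, hε₀not⟩ := hαnot
  have hαlt : {i | α i < ε₀} ∈ D := by
    have := Ultrafilter.compl_mem_iff_notMem.2 hε₀not
    refine Filter.mem_of_superset this ?_
    intro i hi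
    simpa [not_le] using hi
  have hbig : (⋂₀ Set.range (fun b : ε₀.ToType => T (auxTin b))) ∈ D := by
    apply hcomp
    · refine lt_of_le_of_lt Cardinal.mk_range_le ?_
      rw [Cardinal.mk_toType]
      exact Cardinal.lt_ord.1 hε₀
    · rintro A ⟨b, rfl⟩; exact hT _
  have hW : {i | α i < ε₀} ∩ ({i : ι | ∃ ε, ε < r i ∧ i ∉ T ε}
      ∩ ⋂₀ Set.range (fun b : ε₀.ToType => T (auxTin b))) ∈ D :=
    Filter.inter_mem hαlt (Filter.inter_mem hEc' hbig)
  obtain ⟨i, hi1, hi2, hi3⟩ := Ultrafilter.nonempty_of_mem hW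
  obtain ⟨b, hb⟩ := auxTin_surj (hi1 : α i < ε₀)
  rw [Set.sInter_range, Set.mem_iInter] at hi3
  have := hi3 b
  rw [hb] at this
  exact (hαspec i hi2).2 this

/-- Step 4: if `θ₁ ≤ κ₁`, any pre-cut`(f, g)` can be filled. -/
theorem aux_fill {ι J : Type} [LinearOrder J] {κ₁ : Cardinal} (hκ₁ : ℵ₀ < κ₁)
    {D : Ultrafilter ι} (hcomp : IsCompleteUF κ₁ D)
    (hncomp : ¬IsCompleteUF (Order.succ κ₁) D)
    {θ₁ θ₂ : Cardinal} (hsat : SatPlus (θ₁ + θ₂) J)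
    (f : θ₁.ord.ToType → ι → J) (g : θ₂.ord.ToType → ι → J)
    (hfg : ∀ a b, ltD D (f a) (g b)) (hle : θ₁ ≤ κ₁) :
    ∃ h : ι → J, (∀ a, ltD D (f a) h) ∧ ∀ b, ltD D h (g b) := by
  classical
  obtain ⟨r, hr, hmin⟩ := aux_exists_min_unbounded hκ₁ hcomp hncomp
  set A : ι → Set J := fun i => {x | ∃ a, auxTin a < r i ∧ f a i = x} with hA
  set B : ι → Set J :=
    fun i => {x | ∃ b, (∀ a, auxTin a < r i → f a i < x) ∧ g b i = x} with hB
  have cardA : ∀ i, #(A i) ≤ θ₁ + θ₂ := by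
    intro i
    have h1 : A i ⊆ Set.range (fun a => f a i) := by
      rintro x ⟨a, _, rfl⟩; exact Set.mem_range_self a
    refine (Cardinal.mk_le_mk_of_subset h1).trans (Cardinal.mk_range_le.trans ?_)
    rw [Cardinal.mk_toType, Cardinal.card_ord]
    exact self_le_add_right θ₁ θ₂
  have cardB : ∀ i, #(B i) ≤ θ₁ + θ₂ := by
    intro i
    have h1 : B i ⊆ Set.range (fun b => g b i) := by
      rintro x ⟨b, _, rfl⟩; exact Set.mem_range_self b
    refine (Cardinal.mk_le_mk_of_subset h1).trans (Cardinal.mk_range_le.trans ?_)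
    rw [Cardinal.mk_toType, Cardinal.card_ord]
    exact self_le_add_left θ₂ θ₁
  have sep : ∀ i, ∀ x ∈ A i, ∀ y ∈ B i, x < y := by
    rintro i x ⟨a, ha, rfl⟩ y ⟨b, hb, rfl⟩
    exact hb a ha
  choose h h1 h2 using fun i => hsat (A i) (B i) (cardA i) (cardB i) (sep i)
  refine ⟨h, ?_, ?_⟩
  · intro a₀
    have hta : auxTin a₀ < θ₁.ord := auxTin_lt a₀
    have hlt : Order.succ (auxTin a₀) < κ₁.ord := by
      refine (Cardinal.isSuccLimit_ord hκ₁.le).succ_lt ?_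
      exact lt_of_lt_of_le hta (Cardinal.ord_le_ord.2 hle)
    refine Filter.mem_of_superset (hr _ hlt) ?_
    intro i hi
    have hlt2 : auxTin a₀ < r i := Order.succ_le_iff.1 hi
    exact h1 i (f a₀ i) ⟨a₀, hlt2, rfl⟩
  · intro b₀
    set T : Ordinal → Set ι := fun ε => {i | ∀ a, auxTin a = ε → f a i < g b₀ i} with hT
    have hTD : ∀ ε, T ε ∈ D := by
      intro ε
      by_cases hex : ∃ a : θ₁.ord.ToType, auxTin a = ε
      · obtain ⟨a, ha⟩ := hex
        refine Filter.mem_of_superset (hfg a b₀) ?_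
        intro i hi a' ha'
        have : a' = a := auxTin_inj (ha'.trans ha.symm)
        rwa [this]
      · have : T ε = Set.univ := by
          refine Set.eq_univ_of_forall ?_
          intro i a ha
          exact absurd ⟨a, ha⟩ hex
        rw [this]
        exact Filter.univ_mem
    have hE := aux_diag hκ₁ hcomp hr hmin T hTD
    refine Filter.mem_of_superset hE ?_
    intro i hi
    refine h2 i (g b₀ i) ⟨b₀, ?_, rfl⟩
    intro a ha
    exact hi (auxTin a) ha a rfl


/-- Theorem 2.3: if `D` is a `κ₁`-complete, not `κ₁⁺`-complete nonprincipal
ultrafilter on a cardinal `κ₂` (here `#ι`), with `κ₁ > ℵ₀`, and `(θ₁, θ₂)` is the cofinality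
of a cut of `J^{κ₂}/D` for a `(θ₁+θ₂)⁺`-saturated dense linear order `J` without endpoints,
then `θ₁, θ₂ > κ₁`. -/
theorem cut_cofinalities_above_completeness
    {ι : Type} (κ₁ : Cardinal) (hκ₁ : ℵ₀ < κ₁)
    (D : Ultrafilter ι) (hD : Nonprincipal D)
    (hcomp : IsCompleteUF κ₁ D) (hncomp : ¬IsCompleteUF (Order.succ κ₁) D)
    (θ₁ θ₂ : Cardinal) (hθ₁ : θ₁.IsRegular) (hθ₂ : θ₂.IsRegular)
    (J : Type) [LinearOrder J] [DenselyOrdered J] [NoMinOrder J] [NoMaxOrder J] [Nonempty J]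
    (hsat : SatPlus (θ₁ + θ₂) J)
    (f : θ₁.ord.ToType → ι → J) (g : θ₂.ord.ToType → ι → J)
    (hcut : RepCut D f g) :
    κ₁ < θ₁ ∧ κ₁ < θ₂ := by
  obtain ⟨hf, hg, hfg, hnofill⟩ := hcut
  constructor
  · by_contra hlt
    push_neg at hlt
    obtain ⟨h, hh1, hh2⟩ := aux_fill hκ₁ hcomp hncomp hsat f g hfg hlt
    exact hnofill ⟨h, hh1, hh2⟩
  · by_contra hlt
    push_neg at hlt
    have hsat' : SatPlus (θ₂ + θ₁) (OrderDual J) := by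
      intro A B hA hB hAB
      obtain ⟨t, ht1, ht2⟩ := hsat (OrderDual.ofDual ⁻¹' B) (OrderDual.ofDual ⁻¹' A)
        ((Cardinal.mk_preimage_of_injective _ _ (fun x y hxy => hxy)).trans
          (by rwa [add_comm] at hB))
        ((Cardinal.mk_preimage_of_injective _ _ (fun x y hxy => hxy)).trans
          (by rwa [add_comm] at hA))
        (fun b hb a ha => hAB a ha b hb)
      exact ⟨OrderDual.toDual t, fun a ha => ht2 a ha, fun b hb => ht1 b hb⟩
    have hfg' : ∀ (b : θ₂.ord.ToType) (a : θ₁.ord.ToType),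
        ltD (J := OrderDual J) D (fun i => OrderDual.toDual (g b i))
          (fun i => OrderDual.toDual (f a i)) := fun b a => hfg a b
    obtain ⟨h, hh1, hh2⟩ := aux_fill (J := OrderDual J) hκ₁ hcomp hncomp hsat'
      (fun b i => OrderDual.toDual (g b i)) (fun a i => OrderDual.toDual (f a i)) hfg' hlt
    exact hnofill ⟨fun i => OrderDual.ofDual (h i), fun a => hh2 a, fun b => hh1 b⟩
end

section
/- Suppose D is a nonprincipal ultrafilter on an infinite cardinal κ, θ is a regular cardinal with 2^κ < θ, and θ satisfies the partition relation θ → (θ)²_{2^κ}: for every function d from the 2-element subsets of θ into a set of cardinality at most 2^κ, there exists X ⊆ θ with |X| = θ such that d is constant on the 2-element subsets of X. Then for every θ⁺-saturated dense linear order J without endpoints, no pair of sequences of functions from κ to J represents a (θ, θ)-cut of J^κ/D. (The paper states this for θ > κ weakly compact; the partition property is exactly what the proof uses.) -/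
open Cardinal Set

/-- Theorem 2.8: if `θ` is regular, `2^κ < θ` and `θ → (θ)²_{2^κ}`, then for
every `θ⁺`-saturated dense linear order `J` without endpoints, no pair of sequences
represents a `(θ, θ)`-cut of `J^κ/D`. -/
theorem no_symmetric_cut_of_partition
    {ι : Type} [Infinite ι] (D : Ultrafilter ι) (hD : Nonprincipal D)
    (θ : Cardinal) (hθ : θ.IsRegular) (hbig : 2 ^ #ι < θ)
    (hpart : ∀ (ρ : Type), #ρ ≤ 2 ^ #ι → ∀ d : θ.ord.ToType → θ.ord.ToType → ρ,
      ∃ X : Set θ.ord.ToType, #X = θ ∧ ∃ r : ρ, ∀ a ∈ X, ∀ b ∈ X, a < b → d a b = r)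
    (J : Type) [LinearOrder J] [DenselyOrdered J] [NoMinOrder J] [NoMaxOrder J] [Nonempty J]
    (hsat : SatPlus θ J) :
    ∀ f g : θ.ord.ToType → ι → J, ¬RepCut D f g := by
  intro f g hcut
  obtain ⟨hf, hg, hfg, hfill⟩ := hcut
  have hθinf : ℵ₀ ≤ θ := hθ.aleph0_le
  -- the coloring
  obtain ⟨X, hX, A, hA⟩ := hpart (Set ι) (le_of_eq (Cardinal.mk_set))
    (fun a b => {i | f a i < f b i ∧ f b i < g b i ∧ g b i < g a i})
  -- X is unbounded
  have hub : ∀ a : θ.ord.ToType, ∃ c ∈ X, a < c := by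
    intro a
    by_contra hcon
    push_neg at hcon
    have hsub : X ⊆ Set.Iic a := fun c hc => hcon c hc
    have h1 : #X ≤ #(Set.Iic a) := Cardinal.mk_le_mk_of_subset hsub
    have h2 : #(Set.Iic a) < θ := by
      have he : Set.Iic a = insert a (Set.Iio a) := by
        ext x; simp [le_iff_lt_or_eq, or_comm]
      rw [he]
      calc #(insert a (Set.Iio a) : Set θ.ord.ToType) ≤ #(Set.Iio a) + 1 :=
            Cardinal.mk_insert_le
        _ < θ := Cardinal.add_lt_of_lt hθinf (Cardinal.mk_Iio_ord_toType a)
          (lt_of_lt_of_le Cardinal.one_lt_aleph0 hθinf)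
    rw [hX] at h1
    exact absurd (lt_of_le_of_lt h1 h2) (lt_irrefl θ)
  have hmem : ∀ a ∈ X, ∀ b ∈ X, a < b → ∀ i ∈ A,
      f a i < f b i ∧ f b i < g b i ∧ g b i < g a i := by
    intro a ha b hb hab i hi
    rw [← hA a ha b hb hab] at hi
    exact hi
  -- homogeneous color is in D
  have hXne : Nonempty X := Cardinal.mk_ne_zero_iff.1 (by rw [hX]; exact hθ.pos.ne')
  have hAD : A ∈ D := by
    obtain ⟨⟨a, ha⟩⟩ := hXne
    obtain ⟨b, hb, hab⟩ := hub a
    rw [← hA a ha b hb hab]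
    have h1 := hf a b hab
    have h2 := hfg b b
    have h3 := hg a b hab
    exact Filter.inter_mem h1 (Filter.inter_mem h2 h3)
  -- choose separating points on A
  have hsep : ∀ i, i ∈ A → ∃ t : J, (∀ a ∈ X, f a i < t) ∧ (∀ b ∈ X, t < g b i) := by
    intro i hi
    have hlt : ∀ x ∈ Set.range (fun a : X => f a i), ∀ y ∈ Set.range (fun b : X => g b i),
        x < y := by
      rintro _ ⟨⟨a, ha⟩, rfl⟩ _ ⟨⟨b, hb⟩, rfl⟩
      rcases lt_trichotomy a b with hh | hh | hh
      · have hm := hmem a ha b hb hh i hi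
        exact lt_trans hm.1 hm.2.1
      · subst hh
        obtain ⟨c, hc, hac⟩ := hub a
        have hm := hmem a ha c hc hac i hi
        exact lt_trans hm.1 (lt_trans hm.2.1 hm.2.2)
      · have hm := hmem b hb a ha hh i hi
        exact lt_trans hm.2.1 hm.2.2
    obtain ⟨t, ht1, ht2⟩ := hsat (Set.range fun a : X => f a i) (Set.range fun b : X => g b i)
      (le_trans Cardinal.mk_range_le (le_of_eq hX))
      (le_trans Cardinal.mk_range_le (le_of_eq hX)) hlt
    exact ⟨t, fun a ha => ht1 _ ⟨⟨a, ha⟩, rfl⟩, fun b hb => ht2 _ ⟨⟨b, hb⟩, rfl⟩⟩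
  choose t ht1 ht2 using hsep
  classical
  refine hfill ⟨fun i => if hi : i ∈ A then t i hi else Classical.arbitrary J,
    fun a => ?_, fun b => ?_⟩
  · obtain ⟨c, hc, hac⟩ := hub a
    refine Filter.mem_of_superset (Filter.inter_mem hAD (hf a c hac)) ?_
    rintro i ⟨hiA, hilt⟩
    have h2 : f c i < if hi : i ∈ A then t i hi else Classical.arbitrary J := by
      simp only [dif_pos hiA]; exact ht1 i hiA c hc
    exact lt_trans hilt h2
  · obtain ⟨c, hc, hbc⟩ := hub b
    refine Filter.mem_of_superset (Filter.inter_mem hAD (hg b c hbc)) ?_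
    rintro i ⟨hiA, hilt⟩
    have h2 : (if hi : i ∈ A then t i hi else Classical.arbitrary J) < g c i := by
      simp only [dif_pos hiA]; exact ht2 i hiA c hc
    exact lt_trans h2 hilt
end

section
/- Suppose D is a nonprincipal ultrafilter on an infinite cardinal κ, λ and θ are regular cardinals, μ is a cardinal with 2^κ < μ ≤ λ, θ, and there exists a μ-complete ultrafilter E on λ × θ such that for every (α, γ) ∈ λ × θ the set {(ᾱ, γ̄) ∈ λ × θ : α < ᾱ and γ < γ̄} belongs to E. Then for every (λ+θ)⁺-saturated dense linear order J without endpoints, no pair of sequences of functions from κ to J represents a (λ, θ)-cut of J^κ/D. (The paper states this for μ strongly compact with κ < μ ≤ λ, θ; such an ultrafilter E exists in that case.) -/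
open Cardinal Set

/-- Helper: a `μ`-complete ultrafilter simultaneously decides fewer than `μ` sets. -/
private lemma decide_all {ι P : Type} (E : Ultrafilter P) (μ : Cardinal)
    (hcomp : IsCompleteUF μ E) (hμ : (2 ^ #ι) < μ) (Q : ι → Set P) :
    ∃ S : Set P, S ∈ E ∧ ∀ p ∈ S, ∀ i, (Q i ∈ E ↔ p ∈ Q i) := by
  classical
  set R : ι → Set P := fun i => if Q i ∈ E then Q i else (Q i)ᶜ with hR
  refine ⟨⋂₀ Set.range R, ?_, ?_⟩
  · apply hcomp
    · exact lt_of_le_of_lt Cardinal.mk_range_le (lt_trans (Cardinal.cantor _) hμ)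
    · rintro A ⟨i, rfl⟩
      by_cases h : Q i ∈ E
      · simp [R, h]
      · simp only [R, if_neg h]
        exact Ultrafilter.compl_mem_iff_notMem.mpr h
  · intro p hp i
    have h2 := hp (R i) ⟨i, rfl⟩
    by_cases h : Q i ∈ E <;> simp [R, h] at h2 <;> tauto

lemma no_cut_aux
    {ι J Λ Θ : Type} [LinearOrder J] [DenselyOrdered J] [NoMinOrder J] [NoMaxOrder J]
    [Nonempty J] [LinearOrder Λ] [LinearOrder Θ]
    (D : Ultrafilter ι) (μ τ : Cardinal) (hμ1 : 2 ^ #ι < μ)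
    (E : Ultrafilter (Λ × Θ))
    (hEcomp : IsCompleteUF μ E)
    (hEfine : ∀ p : Λ × Θ, {q : Λ × Θ | p.1 < q.1 ∧ p.2 < q.2} ∈ E)
    (hΛ : #Λ ≤ τ) (hΘ : #Θ ≤ τ)
    (hsat : SatPlus τ J) :
    ∀ (f : Λ → ι → J) (g : Θ → ι → J), ¬RepCut D f g := by
  classical
  intro f g hcut
  obtain ⟨h1, h2, h3, h4⟩ := hcut
  apply h4
  obtain ⟨p₀, -⟩ : (Set.univ : Set (Λ × Θ)).Nonempty :=
    Ultrafilter.nonempty_of_mem (Filter.univ_mem (f := (E : Filter (Λ × Θ))))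
  have hfine1 : ∀ α : Λ, {p : Λ × Θ | α < p.1} ∈ E := by
    intro α
    have h := hEfine (α, p₀.2)
    exact Filter.mem_of_superset h (fun q hq => hq.1)
  have hfine2 : ∀ γ : Θ, {p : Λ × Θ | γ < p.2} ∈ E := by
    intro γ
    have h := hEfine (p₀.1, γ)
    exact Filter.mem_of_superset h (fun q hq => hq.2)
  -- E-limit sets
  set Xinf : Set ι := {i | {p : Λ × Θ | f p.1 i < g p.2 i} ∈ E} with hXinf
  set Finf : Λ → Set ι := fun α => {i | {p : Λ × Θ | f α i < f p.1 i} ∈ E} with hFinf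
  set Ginf : Θ → Set ι := fun γ => {i | {p : Λ × Θ | g p.2 i < g γ i} ∈ E} with hGinf
  set Fstar : Set ι := {i | {p : Λ × Θ | i ∈ Finf p.1} ∈ E} with hFstar
  set Gstar : Set ι := {i | {p : Λ × Θ | i ∈ Ginf p.2} ∈ E} with hGstar
  have hXinfD : Xinf ∈ D := by
    obtain ⟨S, hS, hdec⟩ := decide_all E μ hEcomp hμ1 (fun i => {p : Λ × Θ | f p.1 i < g p.2 i})
    obtain ⟨p, hp⟩ := Ultrafilter.nonempty_of_mem hS
    have he : Xinf = {i | f p.1 i < g p.2 i} := by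
      ext i; exact hdec p hp i
    rw [he]
    exact h3 p.1 p.2
  have hFinfD : ∀ α : Λ, Finf α ∈ D := by
    intro α
    obtain ⟨S, hS, hdec⟩ := decide_all E μ hEcomp hμ1 (fun i => {p : Λ × Θ | f α i < f p.1 i})
    obtain ⟨p, hp, hp2⟩ := Ultrafilter.nonempty_of_mem (Filter.inter_mem hS (hfine1 α))
    have he : Finf α = {i | f α i < f p.1 i} := by
      ext i; exact hdec p hp i
    rw [he]
    exact h1 α p.1 hp2
  have hGinfD : ∀ γ : Θ, Ginf γ ∈ D := by
    intro γ
    obtain ⟨S, hS, hdec⟩ := decide_all E μ hEcomp hμ1 (fun i => {p : Λ × Θ | g p.2 i < g γ i})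
    obtain ⟨p, hp, hp2⟩ := Ultrafilter.nonempty_of_mem (Filter.inter_mem hS (hfine2 γ))
    have he : Ginf γ = {i | g p.2 i < g γ i} := by
      ext i; exact hdec p hp i
    rw [he]
    exact h2 γ p.2 hp2
  have hA1 : {p : Λ × Θ | Finf p.1 = Fstar} ∈ E := by
    obtain ⟨S, hS, hdec⟩ := decide_all E μ hEcomp hμ1 (fun i => {p : Λ × Θ | i ∈ Finf p.1})
    refine Filter.mem_of_superset hS (fun p hp => ?_)
    ext i
    exact (hdec p hp i).symm
  have hA2 : {p : Λ × Θ | Ginf p.2 = Gstar} ∈ E := by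
    obtain ⟨S, hS, hdec⟩ := decide_all E μ hEcomp hμ1 (fun i => {p : Λ × Θ | i ∈ Ginf p.2})
    refine Filter.mem_of_superset hS (fun p hp => ?_)
    ext i
    exact (hdec p hp i).symm
  have hFstarD : Fstar ∈ D := by
    obtain ⟨p, hp⟩ := Ultrafilter.nonempty_of_mem hA1
    rw [← hp]
    exact hFinfD p.1
  have hGstarD : Gstar ∈ D := by
    obtain ⟨p, hp⟩ := Ultrafilter.nonempty_of_mem hA2
    rw [← hp]
    exact hGinfD p.2
  set Xd : Set ι := Xinf ∩ Fstar ∩ Gstar with hXd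
  have hXdD : Xd ∈ D := Filter.inter_mem (Filter.inter_mem hXinfD hFstarD) hGstarD
  have hkey : ∀ i ∈ Xd, ∀ α : Λ, Finf α = Fstar → ∀ γ : Θ, Ginf γ = Gstar →
      f α i < g γ i := by
    rintro i ⟨⟨hiX, hiF⟩, hiG⟩ α hα γ hγ
    have e1 : i ∈ Finf α := hα ▸ hiF
    have e1' : {p : Λ × Θ | f α i < f p.1 i} ∈ E := e1
    have e2 : {p : Λ × Θ | f p.1 i < g p.2 i} ∈ E := hiX
    have e3 : i ∈ Ginf γ := hγ ▸ hiG
    have e3' : {p : Λ × Θ | g p.2 i < g γ i} ∈ E := e3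
    obtain ⟨p, ⟨hp1, hp2⟩, hp3⟩ :=
      Ultrafilter.nonempty_of_mem (Filter.inter_mem (Filter.inter_mem e1' e2) e3')
    exact lt_trans (lt_trans hp1 hp2) hp3
  -- build the filler by saturation
  have hsep : ∀ i, i ∈ Xd → ∃ t : J,
      (∀ α : Λ, Finf α = Fstar → f α i < t) ∧ (∀ γ : Θ, Ginf γ = Gstar → t < g γ i) := by
    intro i hi
    obtain ⟨t, ht1, ht2⟩ := hsat ((fun α => f α i) '' {α : Λ | Finf α = Fstar})
      ((fun γ => g γ i) '' {γ : Θ | Ginf γ = Gstar})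
      (le_trans (le_trans Cardinal.mk_image_le (Cardinal.mk_set_le _)) hΛ)
      (le_trans (le_trans Cardinal.mk_image_le (Cardinal.mk_set_le _)) hΘ)
      (by
        rintro a ⟨α, hα, rfl⟩ b ⟨γ, hγ, rfl⟩
        exact hkey i hi α hα γ hγ)
    exact ⟨t, fun α hα => ht1 _ ⟨α, hα, rfl⟩, fun γ hγ => ht2 _ ⟨γ, hγ, rfl⟩⟩
  choose t ht1 ht2 using hsep
  refine ⟨fun i => if hi : i ∈ Xd then t i hi else Classical.arbitrary J, ?_, ?_⟩
  · intro α
    obtain ⟨p, hp1, hp2⟩ := Ultrafilter.nonempty_of_mem (Filter.inter_mem hA1 (hfine1 α))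
    have hmem : {i | f α i < f p.1 i} ∩ Xd ∈ D := Filter.inter_mem (h1 α p.1 hp2) hXdD
    refine Filter.mem_of_superset hmem ?_
    rintro i ⟨hi1, hi2⟩
    simp only [Set.mem_setOf_eq, dif_pos hi2]
    exact lt_trans hi1 (ht1 i hi2 p.1 hp1)
  · intro γ
    obtain ⟨p, hp1, hp2⟩ := Ultrafilter.nonempty_of_mem (Filter.inter_mem hA2 (hfine2 γ))
    have hmem : {i | g p.2 i < g γ i} ∩ Xd ∈ D := Filter.inter_mem (h2 γ p.2 hp2) hXdD
    refine Filter.mem_of_superset hmem ?_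
    rintro i ⟨hi1, hi2⟩
    simp only [Set.mem_setOf_eq, dif_pos hi2]
    exact lt_trans (ht2 i hi2 p.2 hp1) hi1

/-- Theorem 2.11: if `2^κ < μ ≤ λ, θ` with `λ, θ` regular, and there exists a
`μ`-complete ultrafilter `E` on `λ × θ` concentrating on upper-right quadrants, then for
every `(λ+θ)⁺`-saturated dense linear order `J` without endpoints, no pair of sequences
represents a `(λ, θ)`-cut of `J^κ/D`. -/
theorem no_cut_of_complete_fine_ultrafilter
    {ι : Type} [Infinite ι] (D : Ultrafilter ι) (hD : Nonprincipal D)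
    (lam θ μ : Cardinal) (hlam : lam.IsRegular) (hθ : θ.IsRegular)
    (hμ1 : 2 ^ #ι < μ) (hμ2 : μ ≤ lam) (hμ3 : μ ≤ θ)
    (E : Ultrafilter (lam.ord.ToType × θ.ord.ToType))
    (hEcomp : IsCompleteUF μ E)
    (hEfine : ∀ p : lam.ord.ToType × θ.ord.ToType,
      {q : lam.ord.ToType × θ.ord.ToType | p.1 < q.1 ∧ p.2 < q.2} ∈ E)
    (J : Type) [LinearOrder J] [DenselyOrdered J] [NoMinOrder J] [NoMaxOrder J] [Nonempty J]
    (hsat : SatPlus (lam + θ) J) :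
    ∀ (f : lam.ord.ToType → ι → J) (g : θ.ord.ToType → ι → J), ¬RepCut D f g := by
  intro f g
  exact no_cut_aux D μ (lam + θ) hμ1 E hEcomp hEfine
    (by rw [Cardinal.mk_ord_toType]; exact le_self_add)
    (by rw [Cardinal.mk_ord_toType]; exact le_add_self)
    hsat f g
end

section
/- Suppose D is a nonprincipal ultrafilter on an infinite cardinal κ, λ and θ are regular cardinals, and the polarized partition relation (λ θ) → (λ θ)^{1,1}_{2^κ} holds: for every function d from λ × θ into a set of cardinality at most 2^κ, there exist A ⊆ λ of order type λ and B ⊆ θ of order type θ such that d is constant on A × B. Then for every (λ+θ)⁺-saturated dense linear order J without endpoints, no pair of sequences of functions from κ to J represents a (λ, θ)-cut of J^κ/D. -/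
open Cardinal Set

/-- Theorem 2.14: if the polarized partition relation
`(λ θ) → (λ θ)^{1,1}_{2^κ}` holds, then for every `(λ+θ)⁺`-saturated dense linear order `J`
without endpoints, no pair of sequences represents a `(λ, θ)`-cut of `J^κ/D`. -/
theorem no_cut_of_polarized_partition
    {ι : Type} [Infinite ι] (D : Ultrafilter ι) (hD : Nonprincipal D)
    (lam θ : Cardinal) (hlam : lam.IsRegular) (hθ : θ.IsRegular)
    (hpart : ∀ (ρ : Type), #ρ ≤ 2 ^ #ι →
      ∀ d : lam.ord.ToType → θ.ord.ToType → ρ,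
        ∃ (A : Set lam.ord.ToType) (B : Set θ.ord.ToType),
          #A = lam ∧ #B = θ ∧ ∃ r : ρ, ∀ a ∈ A, ∀ b ∈ B, d a b = r)
    (J : Type) [LinearOrder J] [DenselyOrdered J] [NoMinOrder J] [NoMaxOrder J] [Nonempty J]
    (hsat : SatPlus (lam + θ) J) :
    ∀ (f : lam.ord.ToType → ι → J) (g : θ.ord.ToType → ι → J), ¬RepCut D f g := by
  classical
  intro f g hcut
  obtain ⟨hf, hg, hfg, hne⟩ := hcut
  obtain ⟨A, B, hA, hB, X, hX⟩ := hpart (Set ι) (Cardinal.mk_set).le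
    (fun a b => {i | f a i < g b i})
  have hAne : A.Nonempty := by
    rw [← Set.nonempty_coe_sort, ← Cardinal.mk_ne_zero_iff, hA]
    exact hlam.pos.ne'
  have hBne : B.Nonempty := by
    rw [← Set.nonempty_coe_sort, ← Cardinal.mk_ne_zero_iff, hB]
    exact hθ.pos.ne'
  obtain ⟨a0, ha0⟩ := hAne
  obtain ⟨b0, hb0⟩ := hBne
  have hXD : X ∈ D := by
    have h0 := hX a0 ha0 b0 hb0
    rw [← h0]
    exact hfg a0 b0
  have key : ∀ i ∈ X, ∃ t : J, (∀ a ∈ A, f a i < t) ∧ (∀ b ∈ B, t < g b i) := by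
    intro i hi
    obtain ⟨t, ht1, ht2⟩ := hsat ((fun a => f a i) '' A) ((fun b => g b i) '' B)
      ((Cardinal.mk_image_le).trans (by rw [hA]; exact self_le_add_right _ _))
      ((Cardinal.mk_image_le).trans (by rw [hB]; exact self_le_add_left _ _))
      (by
        rintro x ⟨a, ha, rfl⟩ y ⟨b, hb, rfl⟩
        have h1 := hX a ha b hb
        have : i ∈ ({i | f a i < g b i} : Set ι) := by rw [h1]; exact hi
        exact this)
    exact ⟨t, fun a ha => ht1 _ ⟨a, ha, rfl⟩, fun b hb => ht2 _ ⟨b, hb, rfl⟩⟩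
  let h : ι → J := fun i => if hi : i ∈ X then (key i hi).choose else Classical.arbitrary J
  have hh1 : ∀ i (hi : i ∈ X), ∀ a ∈ A, f a i < h i := by
    intro i hi a ha
    simp only [h, dif_pos hi]
    exact (key i hi).choose_spec.1 a ha
  have hh2 : ∀ i (hi : i ∈ X), ∀ b ∈ B, h i < g b i := by
    intro i hi b hb
    simp only [h, dif_pos hi]
    exact (key i hi).choose_spec.2 b hb
  have hAub : ∀ α : lam.ord.ToType, ∃ a ∈ A, α ≤ a := by
    intro α
    by_contra hc
    push_neg at hc
    have hsub : A ⊆ Set.Iio α := fun a ha => hc a ha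
    have := (Cardinal.mk_le_mk_of_subset hsub).trans_lt (Cardinal.mk_Iio_ord_toType α)
    rw [hA] at this
    exact lt_irrefl _ this
  have hBub : ∀ β : θ.ord.ToType, ∃ b ∈ B, β ≤ b := by
    intro β
    by_contra hc
    push_neg at hc
    have hsub : B ⊆ Set.Iio β := fun b hb => hc b hb
    have := (Cardinal.mk_le_mk_of_subset hsub).trans_lt (Cardinal.mk_Iio_ord_toType β)
    rw [hB] at this
    exact lt_irrefl _ this
  apply hne
  refine ⟨h, ?_, ?_⟩
  · intro α
    obtain ⟨a, ha, hαa⟩ := hAub α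
    rcases eq_or_lt_of_le hαa with rfl | hlt
    · exact Filter.mem_of_superset hXD (fun i hi => hh1 i hi α ha)
    · have hm : X ∩ {i | f α i < f a i} ∈ D := Filter.inter_mem hXD (hf α a hlt)
      refine Filter.mem_of_superset hm ?_
      rintro i ⟨hi, hlt2⟩
      exact lt_trans hlt2 (hh1 i hi a ha)
  · intro β
    obtain ⟨b, hb, hβb⟩ := hBub β
    rcases eq_or_lt_of_le hβb with rfl | hlt
    · exact Filter.mem_of_superset hXD (fun i hi => hh2 i hi β hb)
    · have hm : X ∩ {i | g b i < g β i} ∈ D := Filter.inter_mem hXD (hg β b hlt)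
      refine Filter.mem_of_superset hm ?_
      rintro i ⟨hi, hlt2⟩
      exact lt_trans (hh2 i hi b hb) hlt2
end

section
/- Suppose D is a nonprincipal ultrafilter on an infinite cardinal κ, and θ, λ are regular cardinals such that θ^κ < λ. Then for every (λ+θ)⁺-saturated dense linear order J without endpoints, no pair of sequences of functions from κ to J represents a (λ, θ)-cut of J^κ/D. -/
open Cardinal Set

/-- Theorem 2.16: if `θ, λ` are regular and `θ^κ < λ`, then for every
`(λ+θ)⁺`-saturated dense linear order `J` without endpoints, no pair of sequences
represents a `(λ, θ)`-cut of `J^κ/D`. -/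
theorem no_cut_of_small_power
    {ι : Type} [Infinite ι] (D : Ultrafilter ι) (hD : Nonprincipal D)
    (lam θ : Cardinal) (hlam : lam.IsRegular) (hθ : θ.IsRegular)
    (hpow : θ ^ #ι < lam)
    (J : Type) [LinearOrder J] [DenselyOrdered J] [NoMinOrder J] [NoMaxOrder J] [Nonempty J]
    (hsat : SatPlus (lam + θ) J) :
    ∀ (f : lam.ord.ToType → ι → J) (g : θ.ord.ToType → ι → J), ¬RepCut D f g := by
  intro f g hcut
  obtain ⟨hf, -, hfg, hfill⟩ := hcut
  apply hfill
  classical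
  have hTne : Nonempty lam.ord.ToType := by
    rw [← Cardinal.mk_ne_zero_iff, Cardinal.mk_ord_toType]
    exact (aleph0_pos.trans_le hlam.aleph0_le).ne'
  have hGne : Nonempty θ.ord.ToType := by
    rw [← Cardinal.mk_ne_zero_iff, Cardinal.mk_ord_toType]
    exact (aleph0_pos.trans_le hθ.aleph0_le).ne'
  -- mixes
  let mix : (ι → θ.ord.ToType) → ι → J := fun e i => g (e i) i
  let w : (ι → θ.ord.ToType) → lam.ord.ToType := fun e =>
    if h : ∃ α, ¬ ltD D (f α) (mix e) then h.choose else Classical.arbitrary _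
  have hw : ∀ e, (∃ α, ¬ ltD D (f α) (mix e)) → ¬ ltD D (f (w e)) (mix e) := by
    intro e he
    simp only [w, dif_pos he]
    exact he.choose_spec
  -- bound αs
  obtain ⟨αs, hαs⟩ : ∃ αs : lam.ord.ToType, ∀ e, w e < αs := by
    haveI : IsWellOrder lam.ord.ToType (· < ·) := isWellOrder_lt
    have hcard : #(Set.range w) <
        (Ordinal.type ((· < ·) : lam.ord.ToType → lam.ord.ToType → Prop)).cof := by
      rw [Ordinal.type_toType, hlam.cof_eq]
      refine lt_of_le_of_lt Cardinal.mk_range_le ?_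
      refine lt_of_le_of_lt ?_ hpow
      rw [← Cardinal.power_def, Cardinal.mk_ord_toType]
    obtain ⟨αs, h⟩ := not_isCofinal_iff.1 (fun hc => (Order.cof_le hc).not_gt (by rwa [Ordinal.cof_type] at hcard))
    exact ⟨αs, fun e => h _ (Set.mem_range_self e)⟩
  -- claim2 : any mix which is not above some f is below f αs
  have claim2 : ∀ (e : ι → θ.ord.ToType) (α₁ : lam.ord.ToType), ¬ ltD D (f α₁) (mix e) →
      {i | mix e i < f αs i} ∈ D := by
    intro e α₁ hneg
    have hne : ∃ α, ¬ ltD D (f α) (mix e) := ⟨α₁, hneg⟩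
    have h1 : {i | f (w e) i < mix e i}ᶜ ∈ D :=
      (Ultrafilter.compl_mem_iff_notMem).2 (hw e hne)
    have h2 : {i | f (w e) i < f αs i} ∈ D := hf _ _ (hαs e)
    filter_upwards [h1, h2] with i hi1 hi2
    simp only [Set.mem_compl_iff, Set.mem_setOf_eq] at hi1 ⊢
    exact lt_of_le_of_lt (not_lt.mp hi1) hi2
  -- the separating function
  have hAB : ∀ i : ι, ∃ t : J,
      (∀ x : J, (∃ α, f α i = x) → (∀ γ, f αs i < g γ i → x < g γ i) → x < t) ∧
      (∀ γ, f αs i < g γ i → t < g γ i) := by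
    intro i
    have hA : #({x | (∃ α, f α i = x) ∧ ∀ γ, f αs i < g γ i → x < g γ i} : Set J)
        ≤ lam + θ := by
      refine le_trans ?_ (self_le_add_right lam θ)
      have hsub : {x | (∃ α, f α i = x) ∧ ∀ γ, f αs i < g γ i → x < g γ i} ⊆
          Set.range (fun α => f α i) := fun x hx => hx.1
      refine le_trans (Cardinal.mk_le_mk_of_subset hsub) ?_
      refine le_trans Cardinal.mk_range_le ?_
      rw [Cardinal.mk_ord_toType]
    have hB : #(((fun γ => g γ i) '' {γ | f αs i < g γ i} : Set J)) ≤ lam + θ := by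
      refine le_trans ?_ (le_add_self (a := θ) (b := lam))
      refine le_trans (Cardinal.mk_image_le) ?_
      refine le_trans (Cardinal.mk_set_le _) ?_
      rw [Cardinal.mk_ord_toType]
    have hC : ∀ a ∈ {x | (∃ α, f α i = x) ∧ ∀ γ, f αs i < g γ i → x < g γ i},
        ∀ b ∈ (fun γ => g γ i) '' {γ | f αs i < g γ i}, a < b := by
      rintro a ⟨-, ha2⟩ b ⟨γ, hγ, rfl⟩
      exact ha2 γ hγ
    obtain ⟨t, h1, h2⟩ := hsat _ _ hA hB hC
    exact ⟨t, fun x hx1 hx2 => h1 x ⟨hx1, hx2⟩, fun γ hγ => h2 _ ⟨γ, hγ, rfl⟩⟩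
  set h : ι → J := fun i => (hAB i).choose with hh
  refine ⟨h, ?_, ?_⟩
  · -- f side
    intro α₁
    by_contra hc
    have hX : {i | f α₁ i < h i}ᶜ ∈ D := (Ultrafilter.compl_mem_iff_notMem).2 hc
    have hpt : ∀ i, ¬ (f α₁ i < h i) → ∃ γ, f αs i < g γ i ∧ ¬ (f α₁ i < g γ i) := by
      intro i hi
      by_contra hno
      push_neg at hno
      exact hi ((hAB i).choose_spec.1 (f α₁ i) ⟨α₁, rfl⟩ hno)
    let e₁ : ι → θ.ord.ToType := fun i =>
      if hh : ∃ γ, f αs i < g γ i ∧ ¬ (f α₁ i < g γ i) then hh.choose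
      else Classical.arbitrary _
    have he1 : ∀ i, ¬ (f α₁ i < h i) →
        f αs i < mix e₁ i ∧ ¬ (f α₁ i < mix e₁ i) := by
      intro i hi
      have hex := hpt i hi
      simp only [mix, e₁, dif_pos hex]
      exact ⟨hex.choose_spec.1, hex.choose_spec.2⟩
    have hnm : ¬ ltD D (f α₁) (mix e₁) := by
      intro hm
      obtain ⟨i, him, hiX⟩ := Filter.nonempty_of_mem (Filter.inter_mem hm hX)
      exact (he1 i hiX).2 him
    have hkey := claim2 e₁ α₁ hnm
    obtain ⟨i, h1, h2⟩ := Filter.nonempty_of_mem (Filter.inter_mem hkey hX)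
    exact lt_asymm h1 (he1 i h2).1
  · -- g side
    intro β
    have h0 : {i | f αs i < g β i} ∈ D := hfg αs β
    have : {i | f αs i < g β i} ⊆ {i | h i < g β i} := by
      intro i hi
      exact (hAB i).choose_spec.2 β hi
    exact Filter.mem_of_superset h0 this
end

section
/- Let D be a nonprincipal ultrafilter on an infinite cardinal κ, let J be a linear order, let λ be a regular cardinal, let ⟨f_β : β < λ⟩ be a <_D-increasing sequence of functions from κ to J, and let I be a set with I ⊆ J and |I|^κ < λ. Then there exists β_* < λ such that for every function g : κ → I and every β with β_* ≤ β < λ: g <_D f_β if and only if g <_D f_{β_*}, and f_β <_D g if and only if f_{β_*} <_D g. -/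
open Cardinal Set

/-- Claim 2.17: for a `<_D`-increasing `λ`-sequence `f` in `J^κ` and a set
`I ⊆ J` with `|I|^κ < λ` (`λ` regular), there is a threshold `b₀ < λ` past which the
`<_D`-relationship of any `I`-valued function to `f b` stabilizes. -/
theorem eventually_constant_relation
    {ι : Type} [Infinite ι] (D : Ultrafilter ι) (hD : Nonprincipal D)
    (J : Type) [LinearOrder J] (lam : Cardinal) (hlam : lam.IsRegular)
    (f : lam.ord.ToType → ι → J) (hinc : ∀ a b, a < b → ltD D (f a) (f b))
    (I : Set J) (hI : #I ^ #ι < lam) :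
    ∃ b₀ : lam.ord.ToType, ∀ g : ι → J, (∀ i, g i ∈ I) → ∀ b, b₀ ≤ b →
      ((ltD D g (f b) ↔ ltD D g (f b₀)) ∧ (ltD D (f b) g ↔ ltD D (f b₀) g)) := by
  classical
  haveI hne : Nonempty lam.ord.ToType := by
    rw [Ordinal.toType_nonempty_iff_ne_zero]
    simp only [ne_eq, Cardinal.ord_eq_zero]
    exact hlam.pos.ne'
  have upS : ∀ (g : ι → J) (a b : lam.ord.ToType), a ≤ b → ltD D g (f a) → ltD D g (f b) := by
    intro g a b hab h
    rcases eq_or_lt_of_le hab with rfl | hlt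
    · exact h
    · exact Filter.mem_of_superset (Filter.inter_mem h (hinc a b hlt))
        (fun i hi => lt_trans hi.1 hi.2)
  have downT : ∀ (g : ι → J) (a b : lam.ord.ToType), a ≤ b → ltD D (f b) g → ltD D (f a) g := by
    intro g a b hab h
    rcases eq_or_lt_of_le hab with rfl | hlt
    · exact h
    · exact Filter.mem_of_superset (Filter.inter_mem (hinc a b hlt) h)
        (fun i hi => lt_trans hi.1 hi.2)
  have key : ∀ gg : ι → I, ∃ β : lam.ord.ToType, ∀ b, β ≤ b →
      ((ltD D (fun i => (gg i : J)) (f b) ↔ ltD D (fun i => (gg i : J)) (f β)) ∧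
       (ltD D (f b) (fun i => (gg i : J)) ↔ ltD D (f β) (fun i => (gg i : J)))) := by
    intro gg
    set g : ι → J := fun i => (gg i : J) with hgdef
    obtain ⟨s, hs⟩ : ∃ s, (∃ a, ltD D g (f a)) → ltD D g (f s) := by
      by_cases hS : ∃ a, ltD D g (f a)
      · obtain ⟨a, ha⟩ := hS; exact ⟨a, fun _ => ha⟩
      · exact ⟨Classical.arbitrary _, fun h => absurd h hS⟩
    obtain ⟨t, ht⟩ : ∃ t, (∃ a, ¬ ltD D (f a) g) → ¬ ltD D (f t) g := by
      by_cases hT : ∃ a, ¬ ltD D (f a) g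
      · obtain ⟨a, ha⟩ := hT; exact ⟨a, fun _ => ha⟩
      · exact ⟨Classical.arbitrary _, fun h => absurd h hT⟩
    refine ⟨max s t, fun b hb => ⟨⟨fun h => ?_, fun h => ?_⟩, ⟨fun h => ?_, fun h => ?_⟩⟩⟩
    · exact upS g s (max s t) (le_max_left _ _) (hs ⟨b, h⟩)
    · exact upS g (max s t) b hb h
    · exact downT g (max s t) b hb h
    · by_contra hb'
      exact ht ⟨b, hb'⟩ (downT g t (max s t) (le_max_right _ _) h)
  choose β hβ using key
  obtain ⟨b₀, hb₀⟩ : ∃ b₀ : lam.ord.ToType, ∀ gg : ι → I, β gg ≤ b₀ := by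
    set e := (Ordinal.ToType.mk (o := lam.ord)) with he
    have hcard : #(ι → I) < lam.ord.cof := by
      rw [hlam.cof_ord]
      calc #(ι → ↥I) = #↥I ^ #ι := Cardinal.power_def ↥I ι ▸ rfl
        _ < lam := hI
    have hsup : iSup (fun gg : ι → I => ((e.symm (β gg) : Set.Iio lam.ord) : Ordinal))
        < lam.ord :=
      Ordinal.iSup_lt_ord hcard (fun gg => (e.symm (β gg)).2)
    refine ⟨e ⟨_, hsup⟩, fun gg => ?_⟩
    have hle := Ordinal.le_iSup (fun gg : ι → I => ((e.symm (β gg) : Set.Iio lam.ord) : Ordinal)) gg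
    calc β gg = e (e.symm (β gg)) := (e.apply_symm_apply _).symm
      _ ≤ e ⟨_, hsup⟩ := e.monotone (Subtype.coe_le_coe.mp hle)
  refine ⟨b₀, fun g hg b hb => ?_⟩
  have h1 := hβ (fun i => ⟨g i, hg i⟩) b (le_trans (hb₀ _) hb)
  have h2 := hβ (fun i => ⟨g i, hg i⟩) b₀ (hb₀ _)
  exact ⟨h1.1.trans h2.1.symm, h1.2.trans h2.2.symm⟩
end

section
/- Suppose D is a nonprincipal ultrafilter on an infinite cardinal κ, λ is a regular cardinal with λ > κ, and the following holds: for every function c from the 2-element subsets of λ into D, there exist a finite set u ⊆ D and a set S ⊆ λ of cardinality λ such that whenever α < β are both in S, there are a natural number n and ordinals α = γ₀ < γ₁ < ⋯ < γ_n = β with c{γ_l, γ_{l+1}} ∈ u for all l < n. Then for every λ⁺-saturated dense linear order J without endpoints, no pair of sequences of functions from κ to J represents a (λ, λ)-cut of J^κ/D. -/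
open Cardinal Set

/-- Theorem 2.22: if `λ > κ` is regular and every colouring of pairs from `λ`
by members of `D` admits a finite set `u ⊆ D` and a set `S ⊆ λ` of size `λ` through which
any two points of `S` are linked by a finite `<`-chain with colours in `u`, then for every
`λ⁺`-saturated dense linear order `J` without endpoints, no pair of sequences represents a
`(λ, λ)`-cut of `J^κ/D`. -/
theorem no_symmetric_cut_of_chain_condition
    {ι : Type} [Infinite ι] (D : Ultrafilter ι) (hD : Nonprincipal D)
    (lam : Cardinal) (hlam : lam.IsRegular) (hκlam : #ι < lam)
    (hstar : ∀ c : lam.ord.ToType → lam.ord.ToType → Set ι,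
      (∀ a b, a < b → c a b ∈ D) →
      ∃ u : Finset (Set ι), (∀ A ∈ u, A ∈ D) ∧
        ∃ S : Set lam.ord.ToType, #S = lam ∧
          ∀ a ∈ S, ∀ b ∈ S, a < b →
            ∃ (n : ℕ) (γ : Fin (n + 1) → lam.ord.ToType), StrictMono γ ∧
              γ 0 = a ∧ γ (Fin.last n) = b ∧
              ∀ l : Fin n, c (γ l.castSucc) (γ l.succ) ∈ u)
    (J : Type) [LinearOrder J] [DenselyOrdered J] [NoMinOrder J] [NoMaxOrder J] [Nonempty J]
    (hsat : SatPlus lam J) :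
    ∀ f g : lam.ord.ToType → ι → J, ¬RepCut D f g := by
  intro f g hcut
  obtain ⟨hf, hg, hfg, hnofill⟩ := hcut
  -- the colouring
  set c : lam.ord.ToType → lam.ord.ToType → Set ι :=
    fun a b => {i | f a i < f b i ∧ f b i < g b i ∧ g b i < g a i} with hc
  have hcD : ∀ a b, a < b → c a b ∈ D := by
    intro a b hab
    have h1 := hf a b hab
    have h2 := hg a b hab
    have h3 := hfg b b
    have := Filter.inter_mem h1 (Filter.inter_mem h3 h2)
    refine Filter.mem_of_superset this ?_
    rintro i ⟨hi1, hi2, hi3⟩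
    exact ⟨hi1, hi2, hi3⟩
  obtain ⟨u, huD, S, hScard, hchain⟩ := hstar c hcD
  -- the intersection of u
  set A : Set ι := ⋂ x ∈ (u : Set (Set ι)), x with hA
  have hAD : A ∈ D := (Filter.biInter_mem u.finite_toSet).2 fun x hx => huD x hx
  -- key claim: interlocking on A
  have key : ∀ a ∈ S, ∀ b ∈ S, a < b → ∀ i ∈ A,
      f a i < f b i ∧ f b i < g b i ∧ g b i < g a i := by
    intro a ha b hb hab i hi
    obtain ⟨n, γ, hγmono, hγ0, hγlast, hγc⟩ := hchain a ha b hb hab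
    have hlink : ∀ l : Fin n, i ∈ c (γ l.castSucc) (γ l.succ) := by
      intro l
      have := hγc l
      exact Set.mem_iInter₂.mp hi _ this
    have main : ∀ k : Fin (n + 1), 0 < k →
        f (γ 0) i < f (γ k) i ∧ f (γ k) i < g (γ k) i ∧ g (γ k) i < g (γ 0) i := by
      intro k
      induction k using Fin.induction with
      | zero => intro h; exact absurd h (lt_irrefl _)
      | succ l ih =>
        intro _
        obtain ⟨h1, h2, h3⟩ := hlink l
        rcases eq_or_lt_of_le (Fin.zero_le l.castSucc) with h0 | h0
        · rw [← h0] at h1 h3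
          exact ⟨h1, h2, h3⟩
        · obtain ⟨i1, i2, i3⟩ := ih h0
          exact ⟨i1.trans h1, h2, h3.trans i3⟩
    have hn : 0 < Fin.last n := by
      rcases Nat.eq_zero_or_pos n with rfl | hn
      · exfalso
        rw [show (Fin.last 0) = 0 from rfl] at hγlast
        rw [hγ0] at hγlast
        exact absurd (hγlast ▸ hab) (lt_irrefl _)
      · exact Fin.lt_iff_val_lt_val.2 (by simpa using hn)
    have := main (Fin.last n) hn
    rw [hγ0, hγlast] at this
    exact this
  -- f a i < g b i for all a b ∈ S, i ∈ A
  have key2 : ∀ a ∈ S, ∀ b ∈ S, ∀ i ∈ A, f a i < g b i := by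
    have hne : S.Nonempty := by
      rw [← Set.nonempty_coe_sort, ← Cardinal.mk_ne_zero_iff, hScard]
      exact hlam.pos.ne'
    intro a ha b hb i hi
    rcases lt_trichotomy a b with h | rfl | h
    · obtain ⟨h1, h2, _⟩ := key a ha b hb h i hi
      exact h1.trans h2
    · have hx : ∃ x ∈ S, x ≠ a := by
        by_contra hcon
        push_neg at hcon
        have hsub : S ⊆ {a} := fun x hx => hcon x hx
        have hle : #S ≤ 1 := le_trans (Cardinal.mk_le_mk_of_subset hsub) (by simp)
        rw [hScard] at hle
        exact absurd (lt_of_lt_of_le (by norm_num : (1:Cardinal) < ℵ₀) hlam.aleph0_le)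
          (not_lt_of_ge hle)
      obtain ⟨x, hxS, hxa⟩ := hx
      rcases hxa.lt_or_gt with h | h
      · obtain ⟨h1, h2, h3⟩ := key x hxS a ha h i hi
        exact h2
      · obtain ⟨h1, h2, h3⟩ := key a ha x hxS h i hi
        exact h1.trans (h2.trans h3)
    · obtain ⟨_, h2, h3⟩ := key b hb a ha h i hi
      exact h2.trans h3
  -- saturation: pick t i for i ∈ A
  have hsep : ∀ i ∈ A, ∃ t : J, (∀ a ∈ S, f a i < t) ∧ ∀ b ∈ S, t < g b i := by
    intro i hi
    have hAcard : #((fun a => f a i) '' S) ≤ lam := by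
      refine le_trans Cardinal.mk_image_le ?_
      rw [hScard]
    have hBcard : #((fun b => g b i) '' S) ≤ lam := by
      refine le_trans Cardinal.mk_image_le ?_
      rw [hScard]
    obtain ⟨t, ht1, ht2⟩ := hsat _ _ hAcard hBcard (by
      rintro x ⟨a, ha, rfl⟩ y ⟨b, hb, rfl⟩
      exact key2 a ha b hb i hi)
    exact ⟨t, fun a ha => ht1 _ ⟨a, ha, rfl⟩, fun b hb => ht2 _ ⟨b, hb, rfl⟩⟩
  classical
  choose! t ht1 ht2 using hsep
  -- S is unbounded
  have hSunb : ∀ a : lam.ord.ToType, ∃ b ∈ S, a < b := by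
    intro a
    by_contra hcon
    push_neg at hcon
    have hsub : S ⊆ Set.Iic a := fun x hx => hcon x hx
    have h1 : #S ≤ #(Set.Iic a) := Cardinal.mk_le_mk_of_subset hsub
    have h2 : #(Set.Iic a) < lam := by
      have : (Set.Iic a) ⊆ insert a (Set.Iio a) := by
        intro x hx
        rcases eq_or_lt_of_le (Set.mem_Iic.mp hx) with h | h
        · exact Or.inl h
        · exact Or.inr h
      refine lt_of_le_of_lt (Cardinal.mk_le_mk_of_subset this) ?_
      refine lt_of_le_of_lt (Cardinal.mk_insert_le) ?_
      exact Cardinal.add_lt_of_lt hlam.aleph0_le (Cardinal.mk_Iio_ord_toType a)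
        (lt_of_lt_of_le Cardinal.one_lt_aleph0 hlam.aleph0_le)
    rw [hScard] at h1
    exact absurd (lt_of_le_of_lt h1 h2) (lt_irrefl _)
  -- h := t fills the cut
  refine hnofill ⟨t, ?_, ?_⟩
  · intro a
    obtain ⟨b, hb, hab⟩ := hSunb a
    have := Filter.inter_mem (hf a b hab) hAD
    refine Filter.mem_of_superset this ?_
    rintro i ⟨hi1, hi2⟩
    exact lt_trans hi1 (ht1 i hi2 b hb)
  · intro a
    obtain ⟨b, hb, hab⟩ := hSunb a
    have := Filter.inter_mem (hg a b hab) hAD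
    refine Filter.mem_of_superset this ?_
    rintro i ⟨hi1, hi2⟩
    exact lt_trans (ht2 i hi2 b hb) hi1
end

section
/- Suppose κ > ℵ₀ and D is a uniform κ-complete nonprincipal ultrafilter on the cardinal κ (so κ is measurable). Then (κ⁺, κ⁺) ∈ C(D): for every κ⁺⁺-saturated dense linear order J without endpoints, there exist sequences ⟨f_α : α < κ⁺⟩ and ⟨g_β : β < κ⁺⟩ of functions from κ to J that represent a (κ⁺, κ⁺)-cut of J^κ/D. -/
set_option linter.unusedSectionVars false
set_option linter.unusedVariables false
set_option maxHeartbeats 1000000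


open Cardinal Set

namespace SSCut

variable {ι J : Type} [LinearOrder J]

/-- `q` is strictly nested inside `p` at coordinate `i`. -/
def nst (p q : (ι → J) × (ι → J)) (i : ι) : Prop :=
  p.1 i < q.1 i ∧ q.2 i < p.2 i

/-- The stage type: a well order of type `κ⁺`. -/
abbrev TT (ι : Type) : Type := (Order.succ #ι).ord.ToType

/-- The rank type, of order type `κ`. -/
abbrev KK (ι : Type) : Type := (#ι).ord.ToType

section Utils

variable (D : Ultrafilter ι)

theorem small_not_mem (huni : IsUniformUF D) {A : Set ι} (hA : #A < #ι) : A ∉ D :=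
  fun h => absurd (huni A h) hA.ne

theorem mk_Iic_lt (ζ : KK ι) (hκ : ℵ₀ < #ι) : #(Iic ζ) < #ι := by
  rw [← Set.Iio_union_right]
  refine lt_of_le_of_lt (mk_union_le _ _) ?_
  refine Cardinal.add_lt_of_lt hκ.le (Cardinal.mk_Iio_ord_toType ζ) ?_
  · simpa using lt_of_le_of_lt one_le_aleph0 hκ

theorem thresh (huni : IsUniformUF D) (hκ : ℵ₀ < #ι) (r : ι ≃ KK ι) (ζ : KK ι) :
    {i | ζ < r i} ∈ D := by
  rcases (Ultrafilter.mem_or_compl_mem D {i | ζ < r i}) with h | h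
  · exact h
  · exfalso
    have hsub : #({i | ζ < r i}ᶜ : Set ι) ≤ #(Iic ζ) := by
      refine Cardinal.mk_le_of_injective
        (f := fun x : ({i | ζ < r i}ᶜ : Set ι) => (⟨r x.1, show r x.1 ≤ ζ from not_lt.mp x.2⟩ : Iic ζ)) ?_
      intro x y hxy
      exact Subtype.ext (r.injective (by simpa using congrArg Subtype.val hxy))
    exact small_not_mem D huni (lt_of_le_of_lt hsub (mk_Iic_lt ζ hκ)) h

theorem kappa_regular (huni : IsUniformUF D) (hκ : ℵ₀ < #ι)
    (hcomp : IsCompleteUF #ι D) : (#ι).IsRegular := by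
  classical
  refine ⟨hκ.le, ?_⟩
  by_contra hcof
  push_neg at hcof
  have inst : IsWellOrder (KK ι) (· < ·) := isWellOrder_lt
  obtain ⟨S, hUnb, hcard⟩ := Order.exists_cof_eq (KK ι)
  rw [Ordinal.cof_toType] at hcard
  obtain ⟨r⟩ := Cardinal.eq.mp (by rw [Cardinal.mk_toType, Cardinal.card_ord] :
    #ι = #(KK ι))
  have hs : #((fun z : KK ι => {i | z < r i}) '' S) < #ι := by
    refine lt_of_le_of_lt Cardinal.mk_image_le ?_
    rw [hcard]; exact hcof
  have hmem : ∀ A ∈ (fun z : KK ι => {i | z < r i}) '' S, A ∈ D := by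
    rintro A ⟨z, _, rfl⟩
    exact thresh D huni hκ r z
  have hint := hcomp _ hs hmem
  have hempty : ⋂₀ ((fun z : KK ι => {i | z < r i}) '' S) = ∅ := by
    ext i
    simp only [Set.mem_sInter, Set.mem_empty_iff_false, iff_false]
    intro hall
    obtain ⟨z, hzS, hz⟩ := hUnb (r i)
    exact (not_lt.mpr hz) (hall _ ⟨z, hzS, rfl⟩)
  rw [hempty] at hint
  exact Ultrafilter.empty_notMem hint

end Utils

section Construction

variable (D : Ultrafilter ι) [DenselyOrdered J] [Nonempty J] [NoMaxOrder J]

/-- The specification of a good stage-`b` pair `q`, relative to the history `hist`. -/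
def SpecH (b : TT ι) (hist : ∀ a : TT ι, a < b → (ι → J) × (ι → J))
    (q : (ι → J) × (ι → J)) : Prop :=
  (∀ i, q.1 i < q.2 i) ∧
  (∀ a (h : a < b), {i | nst (hist a h) q i} ∈ D) ∧
  (∀ a (h : a < b), ∀ (i : ι) (x : J), (hist a h).1 i < x → x < (hist a h).2 i →
      q.1 i < x → x < q.2 i → nst (hist a h) q i) ∧
  (∀ i : ι, #{a : TT ι // ∃ h : a < b, nst (hist a h) q i} < #ι)

open scoped Classical in
/-- The transfinite construction. -/
noncomputable def FF : TT ι → (ι → J) × (ι → J) :=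
  (wellFounded_lt (α := TT ι)).fix fun b hist =>
    if h : ∃ q, SpecH D b hist q then h.choose
    else (fun _ => Classical.arbitrary J, fun _ => Classical.arbitrary J)

theorem FF_spec {b : TT ι} (hgood : ∃ q, SpecH (J := J) D b (fun a _ => FF D a) q) :
    SpecH (J := J) D b (fun a _ => FF D a) (FF D b) := by
  classical
  have h0 : FF D b = if h : ∃ q, SpecH D b (fun a _ => FF D a) q then h.choose
      else (fun _ => Classical.arbitrary J, fun _ => Classical.arbitrary J) :=
    WellFounded.fix_eq _ _ b
  rw [h0, dif_pos hgood]
  exact hgood.choose_spec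

theorem exists_q (huni : IsUniformUF D) (hκ : ℵ₀ < #ι) (hcomp : IsCompleteUF #ι D)
    (hsat : SatPlus (Order.succ #ι) J) (b : TT ι)
    (IH : ∀ a, a < b → SpecH (J := J) D a (fun c _ => FF D c) (FF D a)) :
    ∃ q, SpecH (J := J) D b (fun a _ => FF D a) q := by
  classical
  by_cases hb : ∃ a : TT ι, a < b
  case neg =>
    obtain ⟨y₀, hy₀⟩ := exists_gt (Classical.arbitrary J)
    refine ⟨(fun _ => Classical.arbitrary J, fun _ => y₀), fun i => hy₀,
      fun a h => absurd ⟨a, h⟩ hb, fun a h => absurd ⟨a, h⟩ hb, fun i => ?_⟩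
    haveI : IsEmpty {a : TT ι // ∃ h : a < b, nst (FF D a)
        ((fun _ => Classical.arbitrary J, fun _ => y₀) : (ι → J) × (ι → J)) i} :=
      ⟨fun x => hb ⟨x.1, x.2.choose⟩⟩
    rw [Cardinal.mk_eq_zero]
    exact lt_of_lt_of_le aleph0_pos hκ.le
  case pos =>
  obtain ⟨a₀, ha₀⟩ := hb
  set Pd := {a : TT ι // a < b} with hPdDef
  haveI : Nonempty Pd := ⟨⟨a₀, ha₀⟩⟩
  set F' : Pd → (ι → J) × (ι → J) := fun p => FF D p.1 with hF'
  have hPd : #Pd ≤ #ι := by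
    have h1 : #Pd < Order.succ #ι := Cardinal.mk_Iio_ord_toType b
    exact Order.lt_succ_iff.mp h1
  have hK2 : #ι = #(KK ι) := by rw [Cardinal.mk_toType, Cardinal.card_ord]
  obtain ⟨r⟩ := Cardinal.eq.mp hK2
  obtain ⟨emb⟩ : Nonempty (Pd ↪ KK ι) := Cardinal.le_def _ _ |>.mp (hK2 ▸ hPd)
  set σ : KK ι → Pd := Function.invFun emb with hσDef
  have hσ : Function.Surjective σ := Function.invFun_surjective emb.injective
  set NSTset : Pd → Pd → Set ι := fun p p' => {i | nst (F' p) (F' p') i} with hNSTdef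
  have hNST : ∀ p p' : Pd, p < p' → NSTset p p' ∈ D := by
    intro p p' hpp
    exact (IH p'.1 p'.2).2.1 p.1 hpp
  set Hset : KK ι → Set ι := fun ζ =>
    {i | ∀ ζ' ζ'' : KK ι, ζ' ≤ ζ → ζ'' ≤ ζ → σ ζ' < σ ζ'' → i ∈ NSTset (σ ζ') (σ ζ'')}
    with hHdef
  have hH : ∀ ζ : KK ι, Hset ζ ∈ D := by
    intro ζ
    set fam : Set (Set ι) := (fun zz : KK ι × KK ι => NSTset (σ zz.1) (σ zz.2)) ''
      {zz | zz.1 ≤ ζ ∧ zz.2 ≤ ζ ∧ σ zz.1 < σ zz.2} with hfam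
    have hfamcard : #fam < #ι := by
      refine lt_of_le_of_lt Cardinal.mk_image_le ?_
      refine lt_of_le_of_lt (Cardinal.mk_le_mk_of_subset (t := Iic ζ ×ˢ Iic ζ) ?_) ?_
      · rintro ⟨z1, z2⟩ ⟨h1, h2, _⟩; exact ⟨h1, h2⟩
      · have heq : #(Iic ζ ×ˢ Iic ζ : Set (KK ι × KK ι)) = #(Iic ζ) * #(Iic ζ) := by
          rw [Cardinal.mk_congr (Equiv.Set.prod _ _)]; simp
        rw [heq]
        exact Cardinal.mul_lt_of_lt hκ.le (mk_Iic_lt ζ hκ) (mk_Iic_lt ζ hκ)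
    have hfammem : ∀ A ∈ fam, A ∈ D := by
      rintro A ⟨⟨z1, z2⟩, ⟨_, _, hlt⟩, rfl⟩
      exact hNST _ _ hlt
    refine Filter.mem_of_superset (hcomp fam hfamcard hfammem) ?_
    intro i hi ζ' ζ'' h1 h2 h3
    exact hi _ ⟨⟨ζ', ζ''⟩, ⟨h1, h2, h3⟩, rfl⟩
  have hthresh : ∀ ζ : KK ι, {i | ζ < r i} ∈ D := thresh D huni hκ r
  set Vmem : ι → Pd → Prop := fun i p => ∃ ζ, ζ < r i ∧ i ∈ Hset ζ ∧ σ ζ = p with hVdef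
  have chainlem : ∀ (i : ι) (p p' : Pd), Vmem i p → Vmem i p' → p < p' →
      i ∈ NSTset p p' := by
    rintro i p p' ⟨ζ, _, hiH, rfl⟩ ⟨ζ', _, hiH', rfl⟩ hlt
    rcases le_total ζ ζ' with hle | hle
    · exact hiH' ζ ζ' hle le_rfl hlt
    · exact hiH ζ ζ' le_rfl hle hlt
  have C1 : ∀ (p : Pd) (i : ι), (F' p).1 i < (F' p).2 i := fun p => (IH p.1 p.2).1
  have fAlem : ∀ (i : ι) (p : Pd), Vmem i p → ∀ p', Vmem i p' →
      (F' p).1 i < (F' p').2 i := by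
    intro i p hp p' hp'
    rcases lt_trichotomy p p' with h | h | h
    · have := chainlem i p p' hp hp' h
      exact lt_trans this.1 (C1 p' i)
    · subst h; exact C1 p i
    · have := chainlem i p' p hp' hp h
      exact lt_trans (C1 p i) this.2
  set Aset : ι → Set J := fun i =>
    {x | (∃ p : Pd, (F' p).1 i = x ∨ (F' p).2 i = x) ∧
      ∀ p, Vmem i p → x < (F' p).2 i} with hAdef
  set Bset : ι → Set J := fun i => {y | ∃ p, Vmem i p ∧ (F' p).2 i = y} with hBdef
  have hAcard : ∀ i, #(Aset i) ≤ Order.succ #ι := by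
    intro i
    have hsub : Aset i ⊆
        range (fun p : Pd => (F' p).1 i) ∪ range (fun p : Pd => (F' p).2 i) := by
      rintro x ⟨⟨p, hp | hp⟩, -⟩
      · exact Or.inl ⟨p, hp⟩
      · exact Or.inr ⟨p, hp⟩
    have h1 : #(range fun p : Pd => (F' p).1 i) ≤ #ι :=
      le_trans Cardinal.mk_range_le hPd
    have h2 : #(range fun p : Pd => (F' p).2 i) ≤ #ι :=
      le_trans Cardinal.mk_range_le hPd
    have h3 : #(Aset i) ≤ #ι := by
      refine le_trans (Cardinal.mk_le_mk_of_subset hsub) ?_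
      refine le_trans (Cardinal.mk_union_le _ _) ?_
      refine le_trans (add_le_add h1 h2) ?_
      exact le_of_eq (Cardinal.add_eq_self hκ.le)
    exact le_trans h3 (Order.le_succ _)
  have hBcard : ∀ i, #(Bset i) ≤ Order.succ #ι := by
    intro i
    have hsub : Bset i ⊆ range (fun p : Pd => (F' p).2 i) := by
      rintro y ⟨p, _, hp⟩; exact ⟨p, hp⟩
    refine le_trans (Cardinal.mk_le_mk_of_subset hsub) ?_
    exact le_trans (le_trans Cardinal.mk_range_le hPd) (Order.le_succ _)
  have hABlt : ∀ i, ∀ x ∈ Aset i, ∀ y ∈ Bset i, x < y := by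
    rintro i x ⟨_, hx⟩ y ⟨p, hp, rfl⟩
    exact hx p hp
  have pick : ∀ i : ι, ∃ tt : J × J, (∀ x ∈ Aset i, x < tt.1) ∧
      (∀ y ∈ Bset i, tt.1 < y) ∧ tt.1 < tt.2 ∧ (∀ y ∈ Bset i, tt.2 < y) := by
    intro i
    obtain ⟨t1, ht1A, ht1B⟩ := hsat (Aset i) (Bset i) (hAcard i) (hBcard i) (hABlt i)
    have hins : #(insert t1 (Aset i) : Set J) ≤ Order.succ #ι := by
      refine le_trans Cardinal.mk_insert_le ?_
      calc #(Aset i) + 1 ≤ Order.succ #ι + Order.succ #ι :=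
            add_le_add (hAcard i) (le_trans (le_of_lt one_lt_aleph0)
              (le_trans hκ.le (Order.le_succ _)))
        _ = Order.succ #ι := Cardinal.add_eq_self (le_trans hκ.le (Order.le_succ _))
    have hord : ∀ x ∈ insert t1 (Aset i), ∀ y ∈ Bset i, x < y := by
      rintro x hx y hy
      rcases hx with rfl | hx
      · exact ht1B y hy
      · exact lt_trans (ht1A x hx) (ht1B y hy)
    obtain ⟨t2, ht2A, ht2B⟩ := hsat (insert t1 (Aset i)) (Bset i) hins (hBcard i) hord
    exact ⟨(t1, t2), ht1A, ht1B, ht2A t1 (mem_insert _ _), ht2B⟩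
  choose tt htt using pick
  set q : (ι → J) × (ι → J) := (fun i => (tt i).1, fun i => (tt i).2) with hq
  have hAq : ∀ i, ∀ x ∈ Aset i, x < q.1 i := fun i => (htt i).1
  have hqB : ∀ i, ∀ y ∈ Bset i, q.2 i < y := fun i => (htt i).2.2.2
  have hq1B : ∀ i, ∀ y ∈ Bset i, q.1 i < y := fun i => (htt i).2.1
  have hq12 : ∀ i, q.1 i < q.2 i := fun i => (htt i).2.2.1
  have hfmem : ∀ (i : ι) (p : Pd), Vmem i p → (F' p).1 i ∈ Aset i := by
    intro i p hp
    exact ⟨⟨p, Or.inl rfl⟩, fun p' hp' => fAlem i p hp p' hp'⟩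
  have hgmem : ∀ (i : ι) (p : Pd), Vmem i p → (F' p).2 i ∈ Bset i := by
    intro i p hp
    exact ⟨p, hp, rfl⟩
  refine ⟨q, hq12, ?_, ?_, ?_⟩
  · -- C2
    intro a h
    obtain ⟨ζa, hζa⟩ := hσ ⟨a, h⟩
    refine Filter.mem_of_superset (Filter.inter_mem (hthresh ζa) (hH ζa)) ?_
    rintro i ⟨hi1, hi2⟩
    have hVp : Vmem i ⟨a, h⟩ := ⟨ζa, hi1, hi2, hζa⟩
    exact ⟨hAq i _ (hfmem i _ hVp), hqB i _ (hgmem i _ hVp)⟩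
  · -- K1
    intro a h i x hfx hxg hqx hxq
    set p : Pd := ⟨a, h⟩
    by_cases hg : ∀ p', Vmem i p' → (F' p).2 i < (F' p').2 i
    · exfalso
      have : (F' p).2 i ∈ Aset i := ⟨⟨p, Or.inr rfl⟩, hg⟩
      have h1 : (F' p).2 i < q.1 i := hAq i _ this
      exact absurd (lt_trans hqx (lt_trans hxg h1)) (lt_irrefl _)
    · push_neg at hg
      obtain ⟨p₀, hVp₀, hge⟩ := hg
      by_cases hf : ∀ p', Vmem i p' → (F' p).1 i < (F' p').2 i
      · refine ⟨hAq i _ ⟨⟨p, Or.inl rfl⟩, hf⟩, ?_⟩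
        exact lt_of_lt_of_le (hqB i _ (hgmem i _ hVp₀)) hge
      · exfalso
        push_neg at hf
        obtain ⟨p₁, hVp₁, hle⟩ := hf
        have h1 : q.2 i < (F' p₁).2 i := hqB i _ (hgmem i _ hVp₁)
        exact absurd (lt_trans hxq (lt_of_lt_of_le h1 (le_trans hle hfx.le)))
          (lt_irrefl _)
  · -- K2
    intro i
    set Sset : Set (TT ι) := {a | ∃ h : a < b, nst (FF D a) q i} with hSdef
    set Vset : Set Pd := {p | Vmem i p} with hVsetdef
    have hVcard : #Vset < #ι := by
      refine lt_of_le_of_lt (Cardinal.mk_le_mk_of_subset (t := σ '' (Iio (r i))) ?_) ?_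
      · rintro p ⟨ζ, hζ, _, rfl⟩; exact ⟨ζ, hζ, rfl⟩
      · exact lt_of_le_of_lt Cardinal.mk_image_le (Cardinal.mk_Iio_ord_toType (r i))
    set Csets : Pd → Set (TT ι) := fun p => {a | a < p.1 ∧ nst (J := J) (FF D a) (FF D p.1) i}
      with hCdef
    have hCcard : ∀ p : Pd, #(Csets p) < #ι := by
      intro p
      have h1 := (IH p.1 p.2).2.2.2 i
      refine lt_of_le_of_lt (le_of_eq (Cardinal.mk_congr ?_)) h1
      exact Equiv.subtypeEquivRight fun a =>
        ⟨fun ⟨h1, h2⟩ => ⟨h1, h2⟩, fun ⟨h1, h2⟩ => ⟨h1, h2⟩⟩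
    have hsub : Sset ⊆ (Subtype.val '' Vset) ∪ ⋃ p ∈ Vset, Csets p := by
      rintro a ⟨h, hn⟩
      set p : Pd := ⟨a, h⟩
      by_cases hv : Vmem i p
      · exact Or.inl ⟨p, hv, rfl⟩
      · right
        have hex : ∃ p₀, Vmem i p₀ ∧ (F' p₀).2 i ≤ (F' p).2 i := by
          by_contra hno
          push_neg at hno
          have : (F' p).2 i ∈ Aset i := ⟨⟨p, Or.inr rfl⟩, fun p' hp' => hno p' hp'⟩
          have h1 : (F' p).2 i < q.1 i := hAq i _ this
          exact absurd (lt_trans (hq12 i) (lt_trans hn.2 h1)) (lt_irrefl _)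
        obtain ⟨p₀, hVp₀, hge⟩ := hex
        obtain ⟨x, hx1, hx2⟩ := exists_between (hq12 i)
        have hxa1 : (F' p).1 i < x := lt_trans hn.1 hx1
        have hxa2 : x < (F' p).2 i := lt_trans hx2 hn.2
        have hxp₀1 : (F' p₀).1 i < x := lt_trans (hAq i _ (hfmem i _ hVp₀)) hx1
        have hxp₀2 : x < (F' p₀).2 i := lt_trans hx2 (hqB i _ (hgmem i _ hVp₀))
        have hne : a ≠ p₀.1 := by
          intro he
          exact hv (by rw [show p = p₀ from Subtype.ext he]; exact hVp₀)
        rcases lt_or_gt_of_ne hne with hlt | hgt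
        · refine mem_biUnion hVp₀ ?_
          exact ⟨hlt, (IH p₀.1 p₀.2).2.2.1 a hlt i x hxa1 hxa2 hxp₀1 hxp₀2⟩
        · exfalso
          have := (IH a h).2.2.1 p₀.1 hgt i x hxp₀1 hxp₀2 hxa1 hxa2
          exact absurd (lt_of_lt_of_le this.2 hge) (lt_irrefl _)
    have hreg : (#ι).IsRegular := kappa_regular D huni hκ hcomp
    calc #Sset ≤ #((Subtype.val '' Vset) ∪ ⋃ p ∈ Vset, Csets p : Set (TT ι)) :=
          Cardinal.mk_le_mk_of_subset hsub
      _ ≤ #(Subtype.val '' Vset) + #(⋃ p ∈ Vset, Csets p : Set (TT ι)) :=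
          Cardinal.mk_union_le _ _
      _ < #ι := by
          refine Cardinal.add_lt_of_lt hκ.le
            (lt_of_le_of_lt Cardinal.mk_image_le hVcard) ?_
          refine lt_of_le_of_lt (Cardinal.mk_biUnion_le _ _) ?_
          refine Cardinal.mul_lt_of_lt hκ.le hVcard ?_
          exact Cardinal.iSup_lt_of_isRegular hreg hVcard fun p => hCcard p

theorem good (huni : IsUniformUF D) (hκ : ℵ₀ < #ι) (hcomp : IsCompleteUF #ι D)
    (hsat : SatPlus (Order.succ #ι) J) :
    ∀ b : TT ι, SpecH (J := J) D b (fun a _ => FF D a) (FF D b) := by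
  intro b
  induction b using WellFoundedLT.induction with
  | ind b IH => exact FF_spec D (exists_q D huni hκ hcomp hsat b IH)

end Construction

end SSCut

/-- Theorem 3.2: if `κ > ℵ₀` is measurable as witnessed by a uniform
`κ`-complete nonprincipal ultrafilter `D` on `κ`, then `(κ⁺, κ⁺) ∈ C(D)`: every
`κ⁺⁺`-saturated dense linear order without endpoints admits sequences representing a
`(κ⁺, κ⁺)`-cut of `J^κ/D`. -/
theorem succ_succ_cut_of_measurable
    {ι : Type} (D : Ultrafilter ι) (hD : Nonprincipal D)
    (hκ : ℵ₀ < #ι) (huni : IsUniformUF D) (hcomp : IsCompleteUF #ι D)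
    (J : Type) [LinearOrder J] [DenselyOrdered J] [NoMinOrder J] [NoMaxOrder J] [Nonempty J]
    (hsat : SatPlus (Order.succ #ι) J) :
    ∃ f g : (Order.succ #ι).ord.ToType → ι → J, RepCut D f g := by
  classical
  have hgood := SSCut.good (J := J) D huni hκ hcomp hsat
  set F : SSCut.TT ι → (ι → J) × (ι → J) := SSCut.FF (J := J) D with hF
  have C1 : ∀ a : SSCut.TT ι, ∀ i, (F a).1 i < (F a).2 i := fun a => (hgood a).1
  have C2 : ∀ a b : SSCut.TT ι, a < b →
      {i | SSCut.nst (J := J) (F a) (F b) i} ∈ D := fun a b hab => (hgood b).2.1 a hab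
  refine ⟨fun a => (F a).1, fun a => (F a).2, ?_, ?_, ?_, ?_⟩
  · intro a b hab
    exact Filter.mem_of_superset (C2 a b hab) fun i hi => hi.1
  · intro a b hab
    exact Filter.mem_of_superset (C2 a b hab) fun i hi => hi.2
  · intro a b
    rcases lt_trichotomy a b with hab | hab | hab
    · refine Filter.mem_of_superset (C2 a b hab) fun i hi => ?_
      exact lt_trans hi.1 (C1 b i)
    · subst hab
      exact Filter.univ_mem' fun i => C1 a i
    · refine Filter.mem_of_superset (C2 b a hab) fun i hi => ?_
      exact lt_trans (C1 a i) hi.2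
  · rintro ⟨h, hf, hg⟩
    have hY : ∀ a : SSCut.TT ι, {i | (F a).1 i < h i ∧ h i < (F a).2 i} ∈ D := by
      intro a
      have := Filter.inter_mem (hf a) (hg a)
      refine Filter.mem_of_superset this ?_
      rintro i ⟨h1, h2⟩
      exact ⟨h1, h2⟩
    choose φ hφ using fun a : SSCut.TT ι => Ultrafilter.nonempty_of_mem (hY a)
    have hfib : ∃ i : ι, #ι < #(φ ⁻¹' {i} : Set (SSCut.TT ι)) := by
      by_contra hc
      push_neg at hc
      have h1 : #(SSCut.TT ι) = Order.succ #ι := by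
        rw [Cardinal.mk_toType, Cardinal.card_ord]
      have h2 : #(SSCut.TT ι) ≤ #ι * #ι := by
        have e : #(SSCut.TT ι) = Cardinal.sum fun i : ι => #(φ ⁻¹' {i} : Set (SSCut.TT ι)) := by
          rw [← Cardinal.mk_sigma]
          refine Cardinal.mk_congr (Equiv.symm ?_)
          refine Equiv.trans (Equiv.sigmaCongrRight fun i => ?_) (Equiv.sigmaFiberEquiv φ)
          exact Equiv.subtypeEquivRight fun a => by simp [Set.mem_preimage]
        rw [e, ← Cardinal.sum_const' ι #ι]
        exact Cardinal.sum_le_sum _ _ fun i => hc i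
      rw [h1] at h2
      have h3 : #ι * #ι = #ι := Cardinal.mul_eq_self hκ.le
      rw [h3] at h2
      exact absurd h2 (Order.lt_succ #ι).not_ge
    obtain ⟨i0, hi0⟩ := hfib
    set S : Set (SSCut.TT ι) := φ ⁻¹' {i0} with hSdef
    have hYS : ∀ a ∈ S, (F a).1 i0 < h i0 ∧ h i0 < (F a).2 i0 := by
      intro a ha
      have h1 := hφ a
      have h2 : φ a = i0 := ha
      rw [h2] at h1
      exact h1
    have hKS : #(SSCut.KK ι) ≤ #S := by
      rw [Cardinal.mk_toType, Cardinal.card_ord]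
      exact hi0.le
    obtain ⟨w⟩ := (Cardinal.le_def _ _).mp hKS
    haveI : IsWellOrder (SSCut.TT ι) (· < ·) := isWellOrder_lt
    set ρ : SSCut.TT ι → Ordinal :=
      fun t => Ordinal.typein (α := SSCut.TT ι) (· < ·) t with hρ
    have hρlt : ∀ t : SSCut.TT ι, ρ t < (Order.succ #ι).ord :=
      fun t => Ordinal.typein_lt_self t
    set o1 : Ordinal := ⨆ ζ : SSCut.KK ι, ρ (w ζ).1 with ho1def
    have ho1 : o1 < (Order.succ #ι).ord := by
      refine Cardinal.iSup_lt_ord_of_isRegular (Cardinal.isRegular_succ hκ.le) ?_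
        fun ζ => hρlt _
      rw [Cardinal.mk_toType, Cardinal.card_ord]
      exact Order.lt_succ _
    have ho1' : o1 < Ordinal.type ((· < ·) : SSCut.TT ι → SSCut.TT ι → Prop) := by
      rwa [Ordinal.type_toType]
    set b0 : SSCut.TT ι := Ordinal.enum (α := SSCut.TT ι) (· < ·) ⟨o1, ho1'⟩ with hb0
    have hρb0 : ρ b0 = o1 := Ordinal.typein_enum _ _
    have hSb : ∃ a ∈ S, b0 < a := by
      by_contra hno
      push_neg at hno
      have hsub : S ⊆ Iic b0 := fun a ha => hno a ha
      have hIic : #(Iic b0) ≤ #ι := by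
        rw [← Set.Iio_union_right]
        refine le_trans (Cardinal.mk_union_le _ _) ?_
        have h1 : #(Iio b0) ≤ #ι := Order.lt_succ_iff.mp (Cardinal.mk_Iio_ord_toType b0)
        have h2 : #({b0} : Set (SSCut.TT ι)) ≤ #ι := by
          rw [Cardinal.mk_singleton]
          exact le_trans Cardinal.one_le_aleph0 hκ.le
        refine le_trans (add_le_add h1 h2) (le_of_eq (Cardinal.add_eq_self hκ.le))
      exact absurd (lt_of_lt_of_le hi0 (le_trans (Cardinal.mk_le_mk_of_subset hsub) hIic))
        (lt_irrefl _)
    obtain ⟨bS, hbSS, hb0bS⟩ := hSb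
    have hwlt : ∀ ζ : SSCut.KK ι, (w ζ).1 < bS := by
      intro ζ
      have h1 : ρ (w ζ).1 ≤ o1 := Ordinal.le_iSup _ ζ
      have h2 : ρ b0 < ρ bS := (Ordinal.typein_lt_typein (· < ·)).mpr hb0bS
      have h3 : ρ (w ζ).1 < ρ bS := lt_of_le_of_lt (hρb0 ▸ h1) h2
      exact (Ordinal.typein_lt_typein (· < ·)).mp h3
    have hKle : #(SSCut.KK ι) ≤
        #{a : SSCut.TT ι // ∃ hab : a < bS, SSCut.nst (J := J) (F a) (F bS) i0} := by
      have hnst : ∀ ζ : SSCut.KK ι, SSCut.nst (J := J) (F (w ζ).1) (F bS) i0 := by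
        intro ζ
        have hb1 := hYS bS hbSS
        have ha1 := hYS (w ζ).1 (w ζ).2
        exact (hgood bS).2.2.1 (w ζ).1 (hwlt ζ) i0 (h i0) ha1.1 ha1.2 hb1.1 hb1.2
      refine Cardinal.mk_le_of_injective
        (f := fun ζ => ⟨(w ζ).1, hwlt ζ, hnst ζ⟩) ?_
      intro ζ ζ' hzz
      apply w.injective
      apply Subtype.ext
      simpa using hzz
    have hcont := (hgood bS).2.2.2 i0
    rw [Cardinal.mk_toType, Cardinal.card_ord] at hKle
    exact absurd (lt_of_le_of_lt hKle hcont) (lt_irrefl _)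
end

section
/- Suppose: (a) D is a uniform nonprincipal ultrafilter on an infinite cardinal κ; (b) λ is a regular cardinal with 2^κ < λ; (c) C̄ = ⟨C_α : α < λ⟩ is a sequence such that C_α ⊆ α for each α < λ, sup(C_α) = α for every limit ordinal α < λ, C_β = C_α ∩ β whenever β ∈ C_α, and for every successor ordinal α either C_α is empty or C_α has a last element; (d) the set S = {δ < λ : otp(C_δ) = κ and δ ∉ ⋃_{α<λ} C_α} is stationary in λ; (e) there is a sequence ⟨(a_δ, ξ_δ) : δ ∈ S⟩ such that a_δ ⊆ nacc(C_δ), otp(a_δ) = κ, ξ_δ < 2^κ, and for every function h : λ → 2^κ there is δ ∈ S such that h is constantly ξ_δ on a_δ. Then (λ, λ) ∈ C(D): for every λ⁺-saturated dense linear order J without endpoints, there exist sequences ⟨f_α : α < λ⟩ and ⟨g_α : α < λ⟩ of functions from κ to J that represent a (λ, λ)-cut of J^κ/D. -/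
open Cardinal Set

/-- The order type of a set of ordinals. -/
noncomputable def setOtp (C : Set Ordinal.{0}) : Ordinal.{1} :=
  Ordinal.type (Subrel ((· < ·) : Ordinal.{0} → Ordinal.{0} → Prop) (· ∈ C))

/-- `C` is a club (closed unbounded) subset of `l`. -/
def IsClubIn (l : Ordinal) (C : Set Ordinal) : Prop :=
  C ⊆ Set.Iio l ∧
  (∀ s : Set Ordinal, s ⊆ C → s.Nonempty → sSup s < l → sSup s ∈ C) ∧
  ∀ a < l, ∃ b ∈ C, a < b

/-- `S` is stationary in `l`: it meets every club of `l`. -/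
def IsStationaryIn (l : Ordinal) (S : Set Ordinal) : Prop :=
  ∀ C : Set Ordinal, IsClubIn l C → (S ∩ C).Nonempty

/-- The non-accumulation points of a set of ordinals. -/
noncomputable def nacc (C : Set Ordinal) : Set Ordinal :=
  {β ∈ C | sSup (C ∩ Set.Iio β) < β}


/-! ### Auxiliary infrastructure for the proof -/

section UFHelpers
variable {ι J : Type} [LinearOrder J] {D : Ultrafilter ι}

theorem memD_mono {X Y : Set ι} (h : X ∈ D) (sub : X ⊆ Y) : Y ∈ D :=
  Filter.mem_of_superset h sub

theorem ltD_of_pointwise {f g : ι → J} (h : ∀ i, f i < g i) : ltD D f g :=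
  Filter.mem_of_superset Filter.univ_mem (fun i _ => h i)

theorem ltD_trans {f g h : ι → J} (h1 : ltD D f g) (h2 : ltD D g h) : ltD D f h :=
  Filter.mem_of_superset (Filter.inter_mem h1 h2) (fun _ hi => lt_trans hi.1 hi.2)

theorem ltD_of_ltD_of_le {f g h : ι → J} (h1 : ltD D f g) (h2 : ∀ i, g i ≤ h i) : ltD D f h :=
  Filter.mem_of_superset h1 (fun i hi => lt_of_lt_of_le hi (h2 i))

theorem ltD_of_le_of_ltD {f g h : ι → J} (h1 : ∀ i, f i ≤ g i) (h2 : ltD D g h) : ltD D f h :=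
  Filter.mem_of_superset h2 (fun i hi => lt_of_le_of_lt (h1 i) hi)

end UFHelpers

/-- The canonical enumeration of a set of ordinals. -/
noncomputable def enumOf (X : Set Ordinal.{0}) (ζ : Ordinal.{0}) : Ordinal.{0} :=
  if h : Ordinal.lift.{1} ζ < setOtp X then
    ((Ordinal.enum (Subrel ((· < ·) : Ordinal.{0} → Ordinal.{0} → Prop) (· ∈ X))
      ⟨Ordinal.lift.{1} ζ, h⟩ : X) : Ordinal)
  else 0

theorem enumOf_mem {X : Set Ordinal.{0}} {ζ : Ordinal.{0}}
    (h : Ordinal.lift.{1} ζ < setOtp X) : enumOf X ζ ∈ X := by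
  rw [enumOf, dif_pos h]
  exact (Ordinal.enum (Subrel ((· < ·) : Ordinal.{0} → Ordinal.{0} → Prop) (· ∈ X))
      ⟨Ordinal.lift.{1} ζ, h⟩).2

theorem enumOf_le_enumOf {X : Set Ordinal.{0}} {ζ₁ ζ₂ : Ordinal.{0}}
    (h12 : ζ₁ ≤ ζ₂) (h2 : Ordinal.lift.{1} ζ₂ < setOtp X) :
    enumOf X ζ₁ ≤ enumOf X ζ₂ := by
  have h1 : Ordinal.lift.{1} ζ₁ < setOtp X := lt_of_le_of_lt (by simpa using h12) h2
  rw [enumOf, enumOf, dif_pos h1, dif_pos h2]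
  rcases eq_or_lt_of_le h12 with rfl | hlt
  · exact le_refl _
  · have : Subrel ((· < ·) : Ordinal.{0} → Ordinal.{0} → Prop) (· ∈ X)
        (Ordinal.enum (Subrel ((· < ·) : Ordinal.{0} → Ordinal.{0} → Prop) (· ∈ X))
          ⟨Ordinal.lift.{1} ζ₁, h1⟩)
        (Ordinal.enum (Subrel ((· < ·) : Ordinal.{0} → Ordinal.{0} → Prop) (· ∈ X))
          ⟨Ordinal.lift.{1} ζ₂, h2⟩) :=
      Ordinal.enum_lt_enum.mpr (Subtype.mk_lt_mk.mpr (by simpa using hlt))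
    exact le_of_lt this

theorem enumOf_surj {X : Set Ordinal.{0}} {o : Ordinal.{0}} (hotp : setOtp X = Ordinal.lift.{1} o)
    {x : Ordinal.{0}} (hx : x ∈ X) : ∃ ζ, ζ < o ∧ enumOf X ζ = x := by
  have ht : Ordinal.typein (Subrel ((· < ·) : Ordinal.{0} → Ordinal.{0} → Prop) (· ∈ X))
      (⟨x, hx⟩ : X) < setOtp X := Ordinal.typein_lt_type _ (⟨x, hx⟩ : X)
  obtain ⟨ζ, hζ⟩ := Ordinal.mem_range_lift_of_le (le_of_lt (hotp ▸ ht))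
  refine ⟨ζ, ?_, ?_⟩
  · have := hζ ▸ ht
    rw [hotp] at this
    exact Ordinal.lift_lt.mp this
  · have h1 : Ordinal.lift.{1} ζ < setOtp X := hζ ▸ ht
    rw [enumOf, dif_pos h1]
    have h2 : (⟨Ordinal.lift.{1} ζ, h1⟩ :
        Iio (Ordinal.type (Subrel ((· < ·) : Ordinal.{0} → Ordinal.{0} → Prop) (· ∈ X)))) =
        ⟨Ordinal.typein (Subrel ((· < ·) : Ordinal.{0} → Ordinal.{0} → Prop) (· ∈ X)) (⟨x, hx⟩ : X),
          Ordinal.typein_lt_type _ _⟩ := Subtype.ext hζ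
    rw [h2, Ordinal.enum_typein]

/-- The local specification of the transfinite construction. -/
def SpecAux {ι J : Type} [LinearOrder J] (D : Ultrafilter ι) (Λ : Ordinal.{0})
    (S : Set Ordinal.{0}) (CC : Ordinal.{0} → Set Ordinal.{0})
    (A : Ordinal.{0} → Set ι) (bm : Ordinal.{0} → ι → Ordinal.{0})
    (α : Ordinal.{0}) (prev : Ordinal.{0} → (ι → J) × (ι → J) × (ι → J))
    (t : (ι → J) × (ι → J) × (ι → J)) : Prop :=
  α < Λ →
    (∀ γ < α, ltD D (prev γ).1 t.1 ∧ ltD D t.2.2 (prev γ).2.2) ∧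
    (∀ i, t.1 i < t.2.1 i ∧ t.2.1 i < t.2.2 i) ∧
    (α ∉ S → ∀ γ ∈ CC α, ∀ i, (prev γ).1 i ≤ t.1 i ∧ t.2.2 i ≤ (prev γ).2.2 i) ∧
    (α ∈ S → ∀ i,
      (i ∈ A α → t.1 i = (prev (bm α i)).2.1 i ∧ (prev (bm α i)).2.1 i < t.2.2 i) ∧
      (i ∉ A α → t.2.2 i = (prev (bm α i)).2.1 i ∧ t.1 i < (prev (bm α i)).2.1 i))

theorem specAux_congr {ι J : Type} [LinearOrder J] {D : Ultrafilter ι} {Λ : Ordinal.{0}}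
    {S : Set Ordinal.{0}} {CC : Ordinal.{0} → Set Ordinal.{0}} {A : Ordinal.{0} → Set ι}
    {bm : Ordinal.{0} → ι → Ordinal.{0}} {α : Ordinal.{0}}
    {prev prev' : Ordinal.{0} → (ι → J) × (ι → J) × (ι → J)}
    {t : (ι → J) × (ι → J) × (ι → J)}
    (hagree : ∀ β < α, prev β = prev' β)
    (hCsub : α < Λ → ∀ γ ∈ CC α, γ < α)
    (hbm : α < Λ → α ∈ S → ∀ i, bm α i < α)
    (h : SpecAux D Λ S CC A bm α prev t) : SpecAux D Λ S CC A bm α prev' t := by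
  intro hΛ
  obtain ⟨p1, p2, p3, p4⟩ := h hΛ
  refine ⟨fun γ hγ => (hagree γ hγ) ▸ p1 γ hγ, p2, ?_, ?_⟩
  · intro hns γ hγ i
    rw [← hagree γ (hCsub hΛ γ hγ)]
    exact p3 hns γ hγ i
  · intro hs i
    rw [← hagree (bm α i) (hbm hΛ hs i)]
    exact p4 hs i

open Classical in
/-- One step of the construction: choose, if possible, a triple satisfying the spec. -/
noncomputable def cseqStep {ι J : Type} [LinearOrder J] [Nonempty J] (D : Ultrafilter ι)
    (Λ : Ordinal.{0}) (S : Set Ordinal.{0}) (CC : Ordinal.{0} → Set Ordinal.{0})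
    (A : Ordinal.{0} → Set ι) (bm : Ordinal.{0} → ι → Ordinal.{0}) (α : Ordinal)
    (hist : ∀ β, β < α → (ι → J) × (ι → J) × (ι → J)) : (ι → J) × (ι → J) × (ι → J) :=
  if H : ∃ t, SpecAux D Λ S CC A bm α
      (fun β => if h : β < α then hist β h else Classical.arbitrary ((ι → J) × (ι → J) × (ι → J))) t
  then H.choose else Classical.arbitrary _

/-- The transfinite construction. -/
noncomputable def cseq {ι J : Type} [LinearOrder J] [Nonempty J] (D : Ultrafilter ι)
    (Λ : Ordinal.{0}) (S : Set Ordinal.{0}) (CC : Ordinal.{0} → Set Ordinal.{0})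
    (A : Ordinal.{0} → Set ι) (bm : Ordinal.{0} → ι → Ordinal.{0}) :
    Ordinal → (ι → J) × (ι → J) × (ι → J)
  | α => cseqStep D Λ S CC A bm α (fun β _ => cseq D Λ S CC A bm β)
  termination_by α => α

theorem cseq_eq {ι J : Type} [LinearOrder J] [Nonempty J] (D : Ultrafilter ι)
    (Λ : Ordinal.{0}) (S : Set Ordinal.{0}) (CC : Ordinal.{0} → Set Ordinal.{0})
    (A : Ordinal.{0} → Set ι) (bm : Ordinal.{0} → ι → Ordinal.{0}) (α : Ordinal) :
    cseq D Λ S CC A bm α =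
      cseqStep (ι := ι) (J := J) D Λ S CC A bm α (fun β _ => cseq D Λ S CC A bm β) := by
  rw [cseq]

/-- If a triple satisfying the spec (relative to `cseq`) exists at `α`, then `cseq α`
satisfies the spec. -/
theorem cseq_spec {ι J : Type} [LinearOrder J] [Nonempty J] (D : Ultrafilter ι)
    (Λ : Ordinal.{0}) (S : Set Ordinal.{0}) (CC : Ordinal.{0} → Set Ordinal.{0})
    (A : Ordinal.{0} → Set ι) (bm : Ordinal.{0} → ι → Ordinal.{0}) (α : Ordinal)
    (hCsub : α < Λ → ∀ γ ∈ CC α, γ < α)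
    (hbm : α < Λ → α ∈ S → ∀ i, bm α i < α)
    (hex : ∃ t, SpecAux D Λ S CC A bm α (cseq (ι := ι) (J := J) D Λ S CC A bm) t) :
    SpecAux D Λ S CC A bm α (cseq (ι := ι) (J := J) D Λ S CC A bm) (cseq D Λ S CC A bm α) := by
  classical
  set prev' := fun β => if h : β < α then cseq D Λ S CC A bm β
    else Classical.arbitrary ((ι → J) × (ι → J) × (ι → J)) with hp
  have hagree : ∀ β < α, prev' β = cseq D Λ S CC A bm β := fun β hβ => dif_pos hβ
  obtain ⟨t, ht⟩ := hex
  have hex' : ∃ t, SpecAux D Λ S CC A bm α prev' t :=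
    ⟨t, specAux_congr (fun β hβ => (hagree β hβ).symm) hCsub hbm ht⟩
  have heq : cseq D Λ S CC A bm α =
      cseqStep (ι := ι) (J := J) D Λ S CC A bm α (fun β _ => cseq D Λ S CC A bm β) :=
    cseq_eq D Λ S CC A bm α
  rw [heq, cseqStep, dif_pos hex']
  exact specAux_congr hagree hCsub hbm hex'.choose_spec

/-- Theorem 3.3: from a uniform nonprincipal ultrafilter `D` on `κ = #ι`, a
regular `λ > 2^κ`, a coherent square-like sequence `C̄`, a stationary set `S` of points of
order type `κ` avoided by all `C_α`, and a diamond-like guessing sequence `⟨(a_δ, ξ_δ)⟩`,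
one gets `(λ, λ) ∈ C(D)`. -/
theorem symmetric_cut_of_square_diamond
    {ι : Type} [Infinite ι] (D : Ultrafilter ι) (hD : Nonprincipal D)
    (huni : IsUniformUF D)
    (lam : Cardinal) (hlam : lam.IsRegular) (hbig : 2 ^ #ι < lam)
    (C : Ordinal → Set Ordinal)
    (hC1 : ∀ α < lam.ord, C α ⊆ Set.Iio α)
    (hC2 : ∀ α < lam.ord, Order.IsSuccLimit α → sSup (C α) = α)
    (hC3 : ∀ α < lam.ord, ∀ β ∈ C α, C β = C α ∩ Set.Iio β)
    (hC4 : ∀ α < lam.ord, (∃ γ, α = Order.succ γ) →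
      C α = ∅ ∨ ∃ m ∈ C α, ∀ x ∈ C α, x ≤ m)
    (S : Set Ordinal)
    (hSdef : S = {δ | δ < lam.ord ∧ setOtp (C δ) = Ordinal.lift.{1} (#ι).ord ∧
      ∀ α < lam.ord, δ ∉ C α})
    (hstat : IsStationaryIn lam.ord S)
    (a : Ordinal → Set Ordinal) (ξ : Ordinal → Ordinal)
    (ha1 : ∀ δ ∈ S, a δ ⊆ nacc (C δ))
    (ha2 : ∀ δ ∈ S, setOtp (a δ) = Ordinal.lift.{1} (#ι).ord)
    (ha3 : ∀ δ ∈ S, ξ δ < (((2 : Cardinal) ^ #ι)).ord)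
    (ha4 : ∀ h : Ordinal → Ordinal, (∀ α < lam.ord, h α < (((2 : Cardinal) ^ #ι)).ord) →
      ∃ δ ∈ S, ∀ β ∈ a δ, h β = ξ δ)
    (J : Type) [LinearOrder J] [DenselyOrdered J] [NoMinOrder J] [NoMaxOrder J] [Nonempty J]
    (hsat : SatPlus lam J) :
    ∃ f g : lam.ord.ToType → ι → J, RepCut D f g := by
  classical
  -- Basic cardinal facts
  have hκinf : ℵ₀ ≤ #ι := Cardinal.infinite_iff.mp ‹Infinite ι›
  have hκlim : Order.IsSuccLimit ((#ι).ord) := Cardinal.isSuccLimit_ord hκinf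
  have hliftlim : Order.IsSuccLimit (Ordinal.lift.{1} (#ι).ord) := Ordinal.isSuccLimit_lift.mpr hκlim
  -- rank function
  obtain ⟨rkE⟩ : Nonempty (ι ≃ (#ι).ord.ToType) :=
    Cardinal.eq.mp (by rw [Cardinal.mk_toType, Cardinal.card_ord])
  set rko : ι → Ordinal := fun i => ((Ordinal.ToType.mk (o := (#ι).ord)).symm (rkE i) : Iio _).1
    with hrko
  have hrko_lt : ∀ i, rko i < (#ι).ord := fun i =>
    ((Ordinal.ToType.mk (o := (#ι).ord)).symm (rkE i)).2
  have hrko_inj : Function.Injective rko := by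
    intro i j hij
    exact rkE.injective ((Ordinal.ToType.mk (o := (#ι).ord)).symm.injective (Subtype.ext hij))
  -- small sets are not in D
  have hDco : ∀ X : Set ι, #X < #ι → Xᶜ ∈ D := fun X h =>
    (Ultrafilter.compl_mem_iff_notMem).2 (fun hX => absurd (huni X hX) (ne_of_lt h))
  have hsmall : ∀ ζ, ζ < (#ι).ord → #{i | rko i < ζ} < #ι := by
    intro ζ hζ
    have hinj : Function.Injective
        (fun p : {i | rko i < ζ} => (Ordinal.ToType.mk (o := ζ)) ⟨rko p.1, p.2⟩) := by
      intro p q h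
      have h2 := (Ordinal.ToType.mk (o := ζ)).injective h
      have h3 : rko p.1 = rko q.1 := Subtype.mk_eq_mk.mp h2
      exact Subtype.ext (hrko_inj h3)
    calc #{i | rko i < ζ} ≤ #(ζ.ToType) := Cardinal.mk_le_of_injective hinj
      _ = ζ.card := Cardinal.mk_toType ζ
      _ < #ι := Cardinal.lt_ord.mp hζ
  -- coding of subsets of ι
  obtain ⟨cEq⟩ : Nonempty (Set ι ≃ (((2 : Cardinal) ^ #ι)).ord.ToType) :=
    Cardinal.eq.mp (by rw [Cardinal.mk_toType, Cardinal.card_ord, Cardinal.mk_set])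
  set enc : Set ι → Ordinal := fun X =>
    ((Ordinal.ToType.mk (o := (((2 : Cardinal) ^ #ι)).ord)).symm (cEq X) : Iio _).1 with henc
  have henc_lt : ∀ X, enc X < (((2 : Cardinal) ^ #ι)).ord := fun X =>
    ((Ordinal.ToType.mk (o := (((2 : Cardinal) ^ #ι)).ord)).symm (cEq X)).2
  set dec : Ordinal → Set ι := fun ζ =>
    if h : ζ < (((2 : Cardinal) ^ #ι)).ord then
      cEq.symm ((Ordinal.ToType.mk (o := (((2 : Cardinal) ^ #ι)).ord)) ⟨ζ, h⟩) else ∅ with hdec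
  have hdec_enc : ∀ X, dec (enc X) = X := by
    intro X
    rw [hdec]
    simp only [dif_pos (henc_lt X)]
    rw [show (⟨enc X, henc_lt X⟩ : Iio (((2 : Cardinal) ^ #ι)).ord) =
      (Ordinal.ToType.mk (o := (((2 : Cardinal) ^ #ι)).ord)).symm (cEq X) from Subtype.ext rfl]
    rw [OrderIso.apply_symm_apply, Equiv.symm_apply_apply]
  set Aset : Ordinal → Set ι := fun δ => dec (ξ δ) with hAset
  -- membership in S
  have hSmem : ∀ δ, δ ∈ S ↔ (δ < lam.ord ∧ setOtp (C δ) = Ordinal.lift.{1} (#ι).ord ∧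
      ∀ α < lam.ord, δ ∉ C α) := fun δ => by rw [hSdef]; exact Iff.rfl
  have hCnotS : ∀ x, x < lam.ord → ∀ y ∈ C x, y ∉ S := fun x hx y hy hyS =>
    ((hSmem y).1 hyS).2.2 x hx hy
  -- C-sets of limit points are unbounded
  have hClimub : ∀ α, α < lam.ord → Order.IsSuccLimit α → ∀ γ < α, ∃ β ∈ C α, γ < β := by
    intro α hα hlim γ hγ
    by_contra hcon
    push_neg at hcon
    have : sSup (C α) ≤ γ := csSup_le' (fun b hb => hcon b hb)
    rw [hC2 α hα hlim] at this
    exact absurd (lt_of_lt_of_le hγ this) (lt_irrefl γ)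
  -- empty C-sets have order type 0
  have hotp_empty : setOtp (∅ : Set Ordinal.{0}) = 0 := by
    rw [setOtp]
    exact Ordinal.type_eq_zero_iff_isEmpty.mpr (by rw [Set.isEmpty_coe_sort])
  have hlift_ne : Ordinal.lift.{1} (#ι).ord ≠ 0 := by
    intro hcon
    rw [show (0 : Ordinal.{1}) = Ordinal.lift.{1, 0} (0 : Ordinal.{0}) from
      Ordinal.lift_zero.symm, Ordinal.lift_inj] at hcon
    exact absurd hcon hκlim.pos.ne'
  -- points of S are limit ordinals
  have hSlim : ∀ δ ∈ S, Order.IsSuccLimit δ := by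
    intro δ hδ
    obtain ⟨hδΛ, hotp, -⟩ := (hSmem δ).1 hδ
    have hCne : C δ ≠ ∅ := by
      intro hcon
      rw [hcon, hotp_empty] at hotp
      exact hlift_ne hotp.symm
    rcases Ordinal.zero_or_succ_or_isSuccLimit δ with rfl | ⟨γ, rfl⟩ | h
    · exact absurd (Set.eq_empty_iff_forall_notMem.mpr
        (fun x hx => absurd (hC1 0 hδΛ hx) (by simp))) hCne
    · exfalso
      rcases hC4 _ hδΛ ⟨γ, rfl⟩ with he | ⟨m, hmC, hmax⟩
      · exact hCne he
      · have hlim' : Order.IsSuccLimit (setOtp (C (Order.succ γ))) := hotp ▸ hliftlim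
        have h1 : Ordinal.typein
            (Subrel ((· < ·) : Ordinal.{0} → Ordinal.{0} → Prop) (· ∈ C (Order.succ γ)))
            (⟨m, hmC⟩ : C (Order.succ γ)) < setOtp (C (Order.succ γ)) :=
          Ordinal.typein_lt_type _ _
        have h2 := hlim'.succ_lt h1
        obtain ⟨b, hb⟩ := Ordinal.typein_surj
          (Subrel ((· < ·) : Ordinal.{0} → Ordinal.{0} → Prop) (· ∈ C (Order.succ γ))) h2
        have hmb : Subrel ((· < ·) : Ordinal.{0} → Ordinal.{0} → Prop) (· ∈ C (Order.succ γ))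
            (⟨m, hmC⟩ : C (Order.succ γ)) b := by
          rw [← Ordinal.typein_lt_typein
            (Subrel ((· < ·) : Ordinal.{0} → Ordinal.{0} → Prop) (· ∈ C (Order.succ γ))), hb]
          exact Order.lt_succ _
        exact absurd (hmax b.1 b.2) (not_le.mpr hmb)
    · exact h
  -- a δ is contained in C δ
  have haC : ∀ δ ∈ S, a δ ⊆ C δ := fun δ hδ x hx => (ha1 δ hδ hx).1
  -- a δ is unbounded in δ
  have haub : ∀ δ ∈ S, ∀ γ < δ, ∃ x ∈ a δ, γ < x := by
    intro δ hδ γ hγ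
    obtain ⟨hδΛ, hotpC, -⟩ := (hSmem δ).1 hδ
    by_contra hcon
    push_neg at hcon
    obtain ⟨β', hβ'C, hγβ'⟩ := hClimub δ hδΛ (hSlim δ hδ) γ hγ
    have hsub2 : C β' ⊆ C δ := by
      rw [hC3 δ hδΛ β' hβ'C]
      exact Set.inter_subset_left
    have hsub : a δ ⊆ C β' := by
      intro x hx
      rw [hC3 δ hδΛ β' hβ'C]
      exact ⟨haC δ hδ hx, lt_of_le_of_lt (hcon x hx) hγβ'⟩
    have hle : setOtp (a δ) ≤ setOtp (C β') :=
      Ordinal.type_le_iff'.mpr ⟨⟨⟨Set.inclusion hsub, Set.inclusion_injective hsub⟩, Iff.rfl⟩⟩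
    have hlt : setOtp (C β') < setOtp (C δ) := by
      refine Ordinal.type_lt_iff.mpr ⟨⟨⟨⟨Set.inclusion hsub2, Set.inclusion_injective hsub2⟩,
        Iff.rfl⟩, ⟨β', hβ'C⟩, ?_⟩⟩
      intro b
      constructor
      · rintro ⟨x, rfl⟩
        have hx' : (x : Ordinal) ∈ C δ ∩ Iio β' := by
          rw [← hC3 δ hδΛ β' hβ'C]
          exact x.2
        exact hx'.2
      · intro hbβ'
        have hbC : (b : Ordinal) ∈ C β' := by
          rw [hC3 δ hδΛ β' hβ'C]
          exact ⟨b.2, hbβ'⟩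
        exact ⟨⟨b.1, hbC⟩, rfl⟩
    rw [ha2 δ hδ] at hle
    rw [hotpC] at hlt
    exact absurd (lt_of_le_of_lt hle hlt) (lt_irrefl _)
  -- the diagonal map
  set bm : Ordinal → ι → Ordinal := fun δ i => enumOf (a δ) (rko i) with hbm
  have hbm_mem : ∀ δ ∈ S, ∀ i, bm δ i ∈ a δ := by
    intro δ hδ i
    exact enumOf_mem (by rw [ha2 δ hδ]; exact Ordinal.lift_lt.mpr (hrko_lt i))
  have hbm_lt : ∀ δ ∈ S, ∀ i, bm δ i < δ :=
    fun δ hδ i => hC1 δ ((hSmem δ).1 hδ).1 (haC δ hδ (hbm_mem δ hδ i))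
  have hbm_C : ∀ δ ∈ S, ∀ i, bm δ i ∈ C δ := fun δ hδ i => haC δ hδ (hbm_mem δ hδ i)
  have hbm_big : ∀ δ ∈ S, ∀ β < δ, {i | β < bm δ i} ∈ D := by
    intro δ hδ β hβ
    obtain ⟨x, hxa, hβx⟩ := haub δ hδ β hβ
    obtain ⟨ζ₀, hζ₀, hz⟩ := enumOf_surj (ha2 δ hδ) hxa
    have hsub : {i | bm δ i ≤ β} ⊆ {i | rko i < ζ₀} := by
      intro i hi
      simp only [mem_setOf_eq] at hi ⊢
      by_contra hge
      have hge' : ζ₀ ≤ rko i := not_lt.mp hge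
      have hle : enumOf (a δ) ζ₀ ≤ enumOf (a δ) (rko i) :=
        enumOf_le_enumOf hge' (by rw [ha2 δ hδ]; exact Ordinal.lift_lt.mpr (hrko_lt i))
      rw [hz] at hle
      exact absurd (le_trans hle hi) (not_le.mpr hβx)
    have hco : {i | bm δ i ≤ β}ᶜ ∈ D :=
      hDco _ (lt_of_le_of_lt (Cardinal.mk_le_mk_of_subset hsub) (hsmall ζ₀ hζ₀))
    refine memD_mono hco (fun i hi => ?_)
    have : ¬ (bm δ i ≤ β) := hi
    exact not_le.mp this
  -- the image cardinality bound
  have himg : ∀ (α : Ordinal), α < lam.ord → ∀ (F : Ordinal → J), #(F '' (C α)) < lam := by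
    intro α hΛ F
    have h1 : Cardinal.lift.{1} #(F '' (C α)) ≤ Cardinal.lift.{0} #(C α) :=
      Cardinal.mk_image_le_lift
    have h2 : #(C α) ≤ #(Iio α) := Cardinal.mk_le_mk_of_subset (hC1 α hΛ)
    have h3 : #(Iio α) = Cardinal.lift.{1} α.card := Ordinal.mk_Iio_ordinal α
    have h4 : α.card < lam := Cardinal.lt_ord.mp hΛ
    have h5 : Cardinal.lift.{1} #(F '' (C α)) < Cardinal.lift.{1} lam := by
      refine lt_of_le_of_lt (le_trans h1 ?_) (Cardinal.lift_lt.mpr h4)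
      rw [Cardinal.lift_uzero, ← h3]
      exact h2
    exact Cardinal.lift_lt.mp h5
  -- the main construction
  set sq := cseq (ι := ι) (J := J) D lam.ord S C Aset bm with hsq
  have main : ∀ α, SpecAux D lam.ord S C Aset bm α sq (sq α) := by
    intro α
    induction α using Ordinal.induction with
    | _ α IH =>
    by_cases hΛ : α < lam.ord
    swap
    · exact fun h => absurd h hΛ
    refine cseq_spec D lam.ord S C Aset bm α (fun hΛ' γ hγ => hC1 α hΛ' hγ)
      (fun _ hs i => hbm_lt α hs i) ?_
    -- derived facts from the induction hypothesis
    have hP1 : ∀ β, β < α → ∀ γ, γ < β →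
        ltD D (sq γ).1 (sq β).1 ∧ ltD D (sq β).2.2 (sq γ).2.2 :=
      fun β hβ γ hγ => ((IH β hβ) (lt_trans hβ hΛ)).1 γ hγ
    have hP2 : ∀ β, β < α → ∀ i, (sq β).1 i < (sq β).2.1 i ∧ (sq β).2.1 i < (sq β).2.2 i :=
      fun β hβ => ((IH β hβ) (lt_trans hβ hΛ)).2.1
    have hP3 : ∀ β, β < α → β ∉ S → ∀ γ ∈ C β, ∀ i,
        (sq γ).1 i ≤ (sq β).1 i ∧ (sq β).2.2 i ≤ (sq γ).2.2 i :=
      fun β hβ => ((IH β hβ) (lt_trans hβ hΛ)).2.2.1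
    have hcross : ∀ β, β < α → ∀ γ, γ < α → ltD D (sq β).1 (sq γ).2.2 := by
      intro β hβ γ hγ
      rcases lt_trichotomy β γ with h | rfl | h
      · exact ltD_trans ((hP1 γ hγ β h).1)
          (ltD_of_pointwise (fun i => lt_trans (hP2 γ hγ i).1 (hP2 γ hγ i).2))
      · exact ltD_of_pointwise (fun i => lt_trans (hP2 β hβ i).1 (hP2 β hβ i).2)
      · exact ltD_trans (ltD_of_pointwise (fun i => lt_trans (hP2 β hβ i).1 (hP2 β hβ i).2))
          ((hP1 β hβ γ h).2)
    by_cases hS : α ∈ S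
    · -- the diagonal stage
      have hαlim : Order.IsSuccLimit α := hSlim α hS
      have hub : ∀ γ < α, ∃ β ∈ C α, γ < β := hClimub α hΛ hαlim
      have hbmlt : ∀ i, bm α i < α := hbm_lt α hS
      have hbmC : ∀ i, bm α i ∈ C α := hbm_C α hS
      set M : ι → J := fun i => (sq (bm α i)).2.1 i with hM
      have hfM : ∀ i, (sq (bm α i)).1 i < M i := fun i => (hP2 _ (hbmlt i) i).1
      have hMg : ∀ i, M i < (sq (bm α i)).2.2 i := fun i => (hP2 _ (hbmlt i) i).2
      choose u hu1 hu2 using fun i => exists_between (hfM i)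
      choose v hv1 hv2 using fun i => exists_between (hMg i)
      set t1 : ι → J := fun i => if i ∈ Aset α then M i else u i with ht1
      set t3 : ι → J := fun i => if i ∈ Aset α then v i else M i with ht3
      have h13 : ∀ i, t1 i < t3 i := by
        intro i
        by_cases hiA : i ∈ Aset α
        · simp only [ht1, ht3]
          rw [if_pos hiA, if_pos hiA]
          exact hv1 i
        · simp only [ht1, ht3]
          rw [if_neg hiA, if_neg hiA]
          exact hu2 i
      choose t2 h21 h23 using fun i => exists_between (h13 i)
      have hkey : ∀ β ∈ C α, ∀ i, β < bm α i →
          (sq β).1 i ≤ (sq (bm α i)).1 i ∧ (sq (bm α i)).2.2 i ≤ (sq β).2.2 i := by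
        intro β hβ i hi
        have hβmem : β ∈ C (bm α i) := by
          rw [hC3 α hΛ (bm α i) (hbmC i)]
          exact ⟨hβ, hi⟩
        exact hP3 (bm α i) (hbmlt i) (hCnotS α hΛ (bm α i) (hbmC i)) β hβmem i
      refine ⟨(t1, t2, t3), fun _ => ⟨?_, fun i => ⟨h21 i, h23 i⟩,
        fun hns => absurd hS hns, ?_⟩⟩
      · intro γ hγ
        obtain ⟨β, hβC, hγβ⟩ := hub γ hγ
        have hβα : β < α := hC1 α hΛ hβC
        have hWD : {i | β < bm α i} ∈ D := hbm_big α hS β hβα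
        constructor
        · have hZ : ltD D (sq γ).1 (sq β).1 := (hP1 β hβα γ hγβ).1
          refine memD_mono (Filter.inter_mem hZ hWD) ?_
          rintro i ⟨hi1, hi2⟩
          have hle : (sq β).1 i ≤ (sq (bm α i)).1 i := (hkey β hβC i hi2).1
          have hlt : (sq γ).1 i < (sq (bm α i)).1 i := lt_of_lt_of_le hi1 hle
          show (sq γ).1 i < t1 i
          simp only [ht1]
          by_cases hiA : i ∈ Aset α
          · rw [if_pos hiA]
            exact lt_trans hlt (hfM i)
          · rw [if_neg hiA]
            exact lt_trans hlt (hu1 i)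
        · have hZ : ltD D (sq β).2.2 (sq γ).2.2 := (hP1 β hβα γ hγβ).2
          refine memD_mono (Filter.inter_mem hZ hWD) ?_
          rintro i ⟨hi1, hi2⟩
          have hle : (sq (bm α i)).2.2 i ≤ (sq β).2.2 i := (hkey β hβC i hi2).2
          have hsmall' : t3 i < (sq (bm α i)).2.2 i := by
            simp only [ht3]
            by_cases hiA : i ∈ Aset α
            · rw [if_pos hiA]
              exact hv2 i
            · rw [if_neg hiA]
              exact hMg i
          show t3 i < (sq γ).2.2 i
          exact lt_trans (lt_of_lt_of_le hsmall' hle) hi1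
      · intro _ i
        constructor
        · intro hiA
          constructor
          · simp only [ht1, hM]
            rw [if_pos hiA]
          · show (sq (bm α i)).2.1 i < t3 i
            have hts : t3 i = v i := by
              simp only [ht3]
              rw [if_pos hiA]
            rw [hts]
            exact hv1 i
        · intro hiA
          constructor
          · simp only [ht3, hM]
            rw [if_neg hiA]
          · show t1 i < (sq (bm α i)).2.1 i
            have hts : t1 i = u i := by
              simp only [ht1]
              rw [if_neg hiA]
            rw [hts]
            exact hu2 i
    · rcases Ordinal.zero_or_succ_or_isSuccLimit α with h0 | ⟨γ0, hsucc⟩ | hlim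
      · -- zero stage
        obtain ⟨j0⟩ := ‹Nonempty J›
        obtain ⟨j1, hj1⟩ := exists_gt j0
        obtain ⟨j2, hj2⟩ := exists_gt j1
        refine ⟨(fun _ => j0, fun _ => j1, fun _ => j2),
          fun _ => ⟨?_, fun _ => ⟨hj1, hj2⟩, ?_, fun hs => absurd hs hS⟩⟩
        · intro γ hγ
          rw [h0] at hγ
          exact absurd hγ (by simp)
        · intro _ γ hγC i
          exfalso
          have hlt : γ < α := hC1 α hΛ hγC
          rw [h0] at hlt
          exact absurd hlt (by simp)
      · -- successor stage
        have hγ0α : γ0 < α := by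
          rw [← hsucc]
          exact Order.lt_succ γ0
        have hle_of_lt_α : ∀ γ, γ < α → γ ≤ γ0 := by
          intro γ hγ
          rw [← hsucc] at hγ
          exact Order.lt_succ_iff.mp hγ
        choose H' hH'1 hH'2 using fun i => exists_between ((hP2 γ0 hγ0α i).2)
        have hfstep : ∀ γ, γ < α → ltD D (sq γ).1 (fun i => (sq γ0).2.1 i) := by
          intro γ hγ
          rcases eq_or_lt_of_le (hle_of_lt_α γ hγ) with rfl | hlt
          · exact ltD_of_pointwise (fun i => (hP2 γ hγ0α i).1)
          · exact ltD_of_ltD_of_le ((hP1 γ0 hγ0α γ hlt).1)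
              (fun i => le_of_lt (hP2 γ0 hγ0α i).1)
        have hgstep : ∀ γ, γ < α → ltD D H' (fun i => (sq γ).2.2 i) := by
          intro γ hγ
          rcases eq_or_lt_of_le (hle_of_lt_α γ hγ) with rfl | hlt
          · exact ltD_of_pointwise (fun i => hH'2 i)
          · exact ltD_of_le_of_ltD (fun i => le_of_lt (hH'2 i)) ((hP1 γ0 hγ0α γ hlt).2)
        rcases hC4 α hΛ ⟨γ0, hsucc.symm⟩ with hCe | ⟨β₀, hβ₀C, hβ₀max⟩
        · -- C α is empty
          choose t2 h21 h23 using fun i => exists_between (hH'1 i)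
          refine ⟨(fun i => (sq γ0).2.1 i, t2, H'),
            fun _ => ⟨?_, fun i => ⟨h21 i, h23 i⟩, ?_, fun hs => absurd hs hS⟩⟩
          · intro γ hγ
            exact ⟨hfstep γ hγ, hgstep γ hγ⟩
          · intro _ γ hγC i
            exfalso
            rw [hCe] at hγC
            exact absurd hγC (Set.notMem_empty γ)
        · -- C α has a maximum β₀
          have hβ₀α : β₀ < α := hC1 α hΛ hβ₀C
          have hβ₀S : β₀ ∉ S := hCnotS α hΛ β₀ hβ₀C
          have hF0G0 : ∀ i, (sq β₀).1 i < (sq β₀).2.2 i := fun i =>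
            lt_trans (hP2 β₀ hβ₀α i).1 (hP2 β₀ hβ₀α i).2
          set aa : ι → J := fun i =>
            max ((sq β₀).1 i) (min ((sq γ0).2.1 i) ((sq β₀).2.2 i)) with haa
          set bb : ι → J := fun i =>
            max ((sq β₀).1 i) (min (H' i) ((sq β₀).2.2 i)) with hbb
          set W : Set ι := {i | aa i < bb i} with hWdef
          set t1 : ι → J := fun i => if i ∈ W then aa i else (sq β₀).1 i with ht1
          set t3 : ι → J := fun i => if i ∈ W then bb i else (sq β₀).2.2 i with ht3
          have h13 : ∀ i, t1 i < t3 i := by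
            intro i
            by_cases hiW : i ∈ W
            · simp only [ht1, ht3]
              rw [if_pos hiW, if_pos hiW]
              exact hiW
            · simp only [ht1, ht3]
              rw [if_neg hiW, if_neg hiW]
              exact hF0G0 i
          choose t2 h21 h23 using fun i => exists_between (h13 i)
          have hWD : W ∈ D := by
            have hYf : ltD D (sq β₀).1 (fun i => (sq γ0).2.1 i) := hfstep β₀ hβ₀α
            have hYg : ltD D H' (fun i => (sq β₀).2.2 i) := hgstep β₀ hβ₀α
            refine memD_mono (Filter.inter_mem hYf hYg) ?_
            rintro i ⟨hif, hig⟩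
            have hif' : (sq β₀).1 i < (sq γ0).2.1 i := hif
            have hig' : H' i < (sq β₀).2.2 i := hig
            have hc1 : (sq γ0).2.1 i < H' i := hH'1 i
            show i ∈ W
            have hgoal : aa i < bb i := by
              simp only [haa, hbb]
              rw [min_eq_left (le_of_lt (lt_trans hc1 hig')),
                min_eq_left (le_of_lt hig'),
                max_eq_right (le_of_lt hif'),
                max_eq_right (le_of_lt (lt_trans hif' hc1))]
              exact hc1
            exact hgoal
          refine ⟨(t1, t2, t3), fun _ => ⟨?_, fun i => ⟨h21 i, h23 i⟩, ?_,
            fun hs => absurd hs hS⟩⟩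
          · intro γ hγ
            constructor
            · have hZ1 : ltD D (sq γ).1 (fun i => (sq γ0).2.1 i) := hfstep γ hγ
              have hZ2 : ltD D (sq γ).1 (sq β₀).2.2 := hcross γ hγ β₀ hβ₀α
              refine memD_mono (Filter.inter_mem (Filter.inter_mem hZ1 hZ2) hWD) ?_
              rintro i ⟨⟨hi1, hi2⟩, hiW⟩
              have hi1' : (sq γ).1 i < (sq γ0).2.1 i := hi1
              have hi2' : (sq γ).1 i < (sq β₀).2.2 i := hi2
              show (sq γ).1 i < t1 i
              simp only [ht1]
              rw [if_pos hiW]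
              calc (sq γ).1 i < min ((sq γ0).2.1 i) ((sq β₀).2.2 i) := lt_min hi1' hi2'
                _ ≤ aa i := by
                  simp only [haa]
                  exact le_max_right _ _
            · have hZ1 : ltD D H' (fun i => (sq γ).2.2 i) := hgstep γ hγ
              have hZ2 : ltD D (sq β₀).1 (sq γ).2.2 := hcross β₀ hβ₀α γ hγ
              refine memD_mono (Filter.inter_mem (Filter.inter_mem hZ1 hZ2) hWD) ?_
              rintro i ⟨⟨hi1, hi2⟩, hiW⟩
              have hi1' : H' i < (sq γ).2.2 i := hi1
              have hi2' : (sq β₀).1 i < (sq γ).2.2 i := hi2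
              show t3 i < (sq γ).2.2 i
              simp only [ht3]
              rw [if_pos hiW]
              calc bb i ≤ max ((sq β₀).1 i) (H' i) := by
                    simp only [hbb]
                    exact max_le_max (le_refl _) (min_le_left _ _)
                _ < (sq γ).2.2 i := max_lt hi2' hi1'
          · intro _ γ hγC i
            have hγβ₀ : γ ≤ β₀ := hβ₀max γ hγC
            have hle : (sq γ).1 i ≤ (sq β₀).1 i ∧ (sq β₀).2.2 i ≤ (sq γ).2.2 i := by
              rcases eq_or_lt_of_le hγβ₀ with rfl | hlt
              · exact ⟨le_refl _, le_refl _⟩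
              · have hmem : γ ∈ C β₀ := by
                  rw [hC3 α hΛ β₀ hβ₀C]
                  exact ⟨hγC, hlt⟩
                exact hP3 β₀ hβ₀α hβ₀S γ hmem i
            constructor
            · refine le_trans hle.1 ?_
              simp only [ht1]
              by_cases hiW : i ∈ W
              · rw [if_pos hiW]
                simp only [haa]
                exact le_max_left _ _
              · rw [if_neg hiW]
            · refine le_trans ?_ hle.2
              simp only [ht3]
              by_cases hiW : i ∈ W
              · rw [if_pos hiW]
                simp only [hbb]
                exact max_le (le_of_lt (hF0G0 i)) (min_le_right _ _)
              · rw [if_neg hiW]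
      · -- limit stage
        have hub : ∀ γ < α, ∃ β ∈ C α, γ < β := hClimub α hΛ hlim
        have hsep : ∀ i : ι, ∀ x ∈ (fun β => (sq β).1 i) '' (C α),
            ∀ y ∈ (fun β => (sq β).2.2 i) '' (C α), x < y := by
          rintro i x ⟨β, hβ, rfl⟩ y ⟨β', hβ', rfl⟩
          have hβα : β < α := hC1 α hΛ hβ
          have hβ'α : β' < α := hC1 α hΛ hβ'
          rcases lt_trichotomy β β' with hlt | rfl | hgt
          · have hmem : β ∈ C β' := by
              rw [hC3 α hΛ β' hβ']
              exact ⟨hβ, hlt⟩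
            exact lt_of_le_of_lt
              ((hP3 β' hβ'α (hCnotS α hΛ β' hβ') β hmem i).1)
              (lt_trans (hP2 β' hβ'α i).1 (hP2 β' hβ'α i).2)
          · exact lt_trans (hP2 β hβα i).1 (hP2 β hβα i).2
          · have hmem : β' ∈ C β := by
              rw [hC3 α hΛ β hβ]
              exact ⟨hβ', hgt⟩
            exact lt_of_lt_of_le
              (lt_trans (hP2 β hβα i).1 (hP2 β hβα i).2)
              ((hP3 β hβα (hCnotS α hΛ β hβ) β' hmem i).2)
        have hsat1 : ∀ i : ι, ∃ t : J, (∀ x ∈ (fun β => (sq β).1 i) '' (C α), x < t) ∧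
            ∀ y ∈ (fun β => (sq β).2.2 i) '' (C α), t < y := fun i =>
          hsat _ _ (le_of_lt (himg α hΛ _)) (le_of_lt (himg α hΛ _)) (hsep i)
        choose t1 ht1a ht1b using hsat1
        have hsat2 : ∀ i : ι, ∃ t : J,
            (∀ x ∈ ((fun β => (sq β).1 i) '' (C α)) ∪ {t1 i}, x < t) ∧
            ∀ y ∈ (fun β => (sq β).2.2 i) '' (C α), t < y := by
          intro i
          refine hsat _ _ ?_ (le_of_lt (himg α hΛ _)) ?_
          · refine le_of_lt (lt_of_le_of_lt (Cardinal.mk_union_le _ _) ?_)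
            refine Cardinal.add_lt_of_lt hlam.aleph0_le (himg α hΛ _) ?_
            rw [Cardinal.mk_singleton]
            exact lt_of_lt_of_le Cardinal.one_lt_aleph0 hlam.aleph0_le
          · rintro x (hx | hx) y hy
            · exact hsep i x hx y hy
            · rw [Set.mem_singleton_iff] at hx
              subst hx
              exact ht1b i y hy
        choose t3 ht3a ht3b using hsat2
        have h13 : ∀ i, t1 i < t3 i := fun i =>
          ht3a i (t1 i) (Set.mem_union_right _ rfl)
        choose t2 h21 h23 using fun i => exists_between (h13 i)
        refine ⟨(t1, t2, t3), fun _ => ⟨?_, fun i => ⟨h21 i, h23 i⟩, ?_,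
          fun hs => absurd hs hS⟩⟩
        · intro γ hγ
          obtain ⟨β, hβC, hγβ⟩ := hub γ hγ
          have hβα : β < α := hC1 α hΛ hβC
          constructor
          · exact ltD_trans ((hP1 β hβα γ hγβ).1)
              (ltD_of_pointwise (fun i => ht1a i _ (Set.mem_image_of_mem _ hβC)))
          · exact ltD_trans
              (ltD_of_pointwise (fun i => ht3b i _ (Set.mem_image_of_mem _ hβC)))
              ((hP1 β hβα γ hγβ).2)
        · intro _ γ hγC i
          exact ⟨le_of_lt (ht1a i _ (Set.mem_image_of_mem _ hγC)),
            le_of_lt (ht3b i _ (Set.mem_image_of_mem _ hγC))⟩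
  -- global consequences
  have gP1f : ∀ γ β, γ < β → β < lam.ord → ltD D (sq γ).1 (sq β).1 :=
    fun γ β h hβ => (((main β) hβ).1 γ h).1
  have gP1g : ∀ γ β, γ < β → β < lam.ord → ltD D (sq β).2.2 (sq γ).2.2 :=
    fun γ β h hβ => (((main β) hβ).1 γ h).2
  have gP2 : ∀ β, β < lam.ord → ∀ i, (sq β).1 i < (sq β).2.1 i ∧ (sq β).2.1 i < (sq β).2.2 i :=
    fun β hβ => ((main β) hβ).2.1
  have gcross : ∀ β, β < lam.ord → ∀ γ, γ < lam.ord → ltD D (sq β).1 (sq γ).2.2 := by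
    intro β hβ γ hγ
    rcases lt_trichotomy β γ with h | rfl | h
    · exact ltD_trans (gP1f β γ h hγ)
        (ltD_of_pointwise (fun i => lt_trans (gP2 γ hγ i).1 (gP2 γ hγ i).2))
    · exact ltD_of_pointwise (fun i => lt_trans (gP2 β hβ i).1 (gP2 β hβ i).2)
    · exact ltD_trans (ltD_of_pointwise (fun i => lt_trans (gP2 β hβ i).1 (gP2 β hβ i).2))
        (gP1g γ β h hβ)
  -- assemble the cut
  set po : lam.ord.ToType → Ordinal := fun x => ((Ordinal.ToType.mk (o := lam.ord)).symm x : Iio _).1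
    with hpo
  have hpo_lt : ∀ x, po x < lam.ord := fun x => ((Ordinal.ToType.mk (o := lam.ord)).symm x).2
  have hpo_mono : ∀ {x y : lam.ord.ToType}, x < y → po x < po y := by
    intro x y hxy
    exact Subtype.coe_lt_coe.mpr ((Ordinal.ToType.mk (o := lam.ord)).symm.lt_iff_lt.mpr hxy)
  refine ⟨fun x => (sq (po x)).1, fun x => (sq (po x)).2.2, ?_, ?_, ?_, ?_⟩
  · exact fun x y hxy => gP1f (po x) (po y) (hpo_mono hxy) (hpo_lt y)
  · exact fun x y hxy => gP1g (po x) (po y) (hpo_mono hxy) (hpo_lt y)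
  · exact fun x y => gcross (po x) (hpo_lt x) (po y) (hpo_lt y)
  · -- no filler
    rintro ⟨h, hf, hg⟩
    obtain ⟨δ, hδS, hguess⟩ := ha4 (fun β => enc {i | h i < (sq β).2.1 i})
      (fun β _ => henc_lt _)
    have hδΛ : δ < lam.ord := ((hSmem δ).1 hδS).1
    have hx : po (Ordinal.ToType.mk (o := lam.ord) ⟨δ, hδΛ⟩) = δ := by
      rw [hpo]
      simp only [OrderIso.symm_apply_apply]
    have hXf : ltD D (sq δ).1 h := by
      have h1 := hf (Ordinal.ToType.mk (o := lam.ord) ⟨δ, hδΛ⟩)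
      simp only [hx] at h1
      exact h1
    have hXg : ltD D h (sq δ).2.2 := by
      have h1 := hg (Ordinal.ToType.mk (o := lam.ord) ⟨δ, hδΛ⟩)
      simp only [hx] at h1
      exact h1
    obtain ⟨i, hi1, hi2⟩ := Ultrafilter.nonempty_of_mem (Filter.inter_mem hXf hXg)
    have hbmi : bm δ i ∈ a δ := hbm_mem δ hδS i
    have hEq : {i' | h i' < (sq (bm δ i)).2.1 i'} = Aset δ := by
      have h1 := congrArg dec (hguess (bm δ i) hbmi)
      rw [hdec_enc] at h1
      exact h1
    have hspec := ((main δ) hδΛ).2.2.2 hδS i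
    have hi1' : (sq δ).1 i < h i := hi1
    have hi2' : h i < (sq δ).2.2 i := hi2
    by_cases hiA : i ∈ Aset δ
    · have hmem : h i < (sq (bm δ i)).2.1 i := by
        have : i ∈ {i' | h i' < (sq (bm δ i)).2.1 i'} := hEq ▸ hiA
        exact this
      have heq1 : (sq δ).1 i = (sq (bm δ i)).2.1 i := (hspec.1 hiA).1
      rw [heq1] at hi1'
      exact absurd (lt_trans hi1' hmem) (lt_irrefl _)
    · have hmem : ¬ (h i < (sq (bm δ i)).2.1 i) := by
        intro hm
        exact hiA (hEq ▸ (hm : i ∈ {i' | h i' < (sq (bm δ i)).2.1 i'}))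
      have heq1 : (sq δ).2.2 i = (sq (bm δ i)).2.1 i := (hspec.2 hiA).1
      rw [heq1] at hi2'
      exact hmem hi2'
end

section
/- Suppose σ < κ ≤ μ < λ are infinite cardinals with κ and λ regular, |α|^{<κ} < λ for every α < λ, τ : λ × λ → σ is a function, U is a stationary subset of λ with U ⊆ {α < λ : cf(α) ≥ κ}, τ₁ : U → σ is a function, and ⟨β_{v,ξ} : v ∈ [U]^{<κ}, ξ < μ⟩ is a family of ordinals less than λ such that sup(v) < β_{v,ξ} for all v and ξ, and for every v ∈ [U]^{<κ} there is some ξ < μ such that τ(α, β_{v,ξ}) = τ₁(α) for every α ∈ v. Then there are a club E of λ and a function τ₂ : U ∩ E → σ such that: for every v ∈ [U]^{<κ} and every δ ∈ U ∩ E with sup(v) < δ, there is an ordinal β with sup(v) < β < δ such that τ(α, β) = τ₁(α) for every α ∈ v and τ(β, δ) = τ₂(δ). -/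
open Cardinal Set

theorem mySSup_lt_of_card_lt_cof {o : Ordinal.{0}} {S : Set Ordinal.{0}}
    (h1 : ∀ x ∈ S, x < o) (h2 : #S < Cardinal.lift.{1} o.cof) : sSup S < o := by
  have hS : S ⊆ Set.Iio o := fun x hx => h1 x hx
  have ho : 0 < o := by
    rcases eq_zero_or_pos o with rfl | h
    · rw [Ordinal.cof_zero, Cardinal.lift_zero] at h2
      exact absurd h2 (Cardinal.zero_le _).not_gt
    · exact h
  rcases S.eq_empty_or_nonempty with rfl | hne
  · rw [csSup_empty, Ordinal.bot_eq_zero]; exact ho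
  · have hsm : Small.{0} S := small_subset hS
    have hrange : Set.range (fun i : Shrink.{0} S => ((equivShrink S).symm i : Ordinal)) = S := by
      ext x
      constructor
      · rintro ⟨i, rfl⟩; exact ((equivShrink S).symm i).2
      · intro hx; exact ⟨equivShrink S ⟨x, hx⟩, by simp⟩
    have hss : sSup S = ⨆ i : Shrink.{0} S, ((equivShrink S).symm i : Ordinal) := by
      rw [iSup, hrange]
    rw [hss]
    refine Ordinal.iSup_lt_ord ?_ (fun i => h1 _ ((equivShrink S).symm i).2)
    have hl : Cardinal.lift.{1} #(Shrink.{0} (↥S)) = #(↥S) := by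
      simpa using Cardinal.lift_mk_shrink' (↥S)
    have := h2
    rw [← hl] at this
    exact (Cardinal.lift_lt).1 this

theorem myMk_small_subsets_le (γ : Ordinal.{0}) (κ : Cardinal.{0}) :
    #{v : Set Ordinal.{0} // v ⊆ Set.Iio γ ∧ #v < Cardinal.lift.{1} κ} ≤
      Cardinal.lift.{1} (κ * ((γ.card ⊔ ℵ₀) ^< κ)) := by
  classical
  set ρ := γ.card ⊔ ℵ₀ with hρ
  have hex : ∀ v : {v : Set Ordinal.{0} // v ⊆ Set.Iio γ ∧ #v < Cardinal.lift.{1} κ},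
      ∃ ν : Cardinal.{0}, ν < κ ∧ Cardinal.lift.{1} ν = #(↥v.1) :=
    fun v => Cardinal.lt_lift_iff.1 v.2.2
  choose νf hν1 hν2 using hex
  have hinj : Function.Injective (fun v : {v : Set Ordinal.{0} // v ⊆ Set.Iio γ ∧ #v < Cardinal.lift.{1} κ} =>
      (⟨⟨νf v, hν1 v⟩, ⟨v.1, v.2.1, le_of_eq (hν2 v).symm⟩⟩ :
        Σ ν : ↥(Set.Iio κ), {v : Set Ordinal.{0} // v ⊆ Set.Iio γ ∧ #v ≤ Cardinal.lift.{1} ν.1})) := by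
    intro a b h
    have h2 := congrArg (fun p : (Σ ν : ↥(Set.Iio κ),
        {v : Set Ordinal.{0} // v ⊆ Set.Iio γ ∧ #v ≤ Cardinal.lift.{1} ν.1}) => (p.2.1 : Set Ordinal)) h
    exact Subtype.ext h2
  have hIio : #(↥(Set.Iio κ)) ≤ Cardinal.lift.{1} κ := by
    have hi : Function.Injective (fun ν : ↥(Set.Iio κ) =>
        (⟨ν.1.ord, Cardinal.ord_lt_ord.2 ν.2⟩ : ↥(Set.Iio κ.ord))) := by
      intro a b h
      exact Subtype.ext (Cardinal.ord_injective (congrArg Subtype.val h))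
    refine (Cardinal.mk_le_of_injective hi).trans ?_
    rw [Ordinal.mk_Iio_ordinal, Cardinal.card_ord]
  have h3 : ∀ ν : ↥(Set.Iio κ),
      #{v : Set Ordinal.{0} // v ⊆ Set.Iio γ ∧ #v ≤ Cardinal.lift.{1} ν.1} ≤
        Cardinal.lift.{1} (ρ ^< κ) := by
    intro ν
    refine (Cardinal.mk_bounded_subset_le _ _).trans ?_
    have hmk : #(↥(Set.Iio γ : Set Ordinal.{0})) = Cardinal.lift.{1} γ.card :=
      Ordinal.mk_Iio_ordinal γ
    rw [hmk]
    have hm : (max (Cardinal.lift.{1} γ.card) ℵ₀) = Cardinal.lift.{1} ρ := by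
      rw [hρ, Cardinal.lift_max, Cardinal.lift_aleph0]
    rw [hm, ← Cardinal.lift_power]
    exact Cardinal.lift_le.2 (Cardinal.le_powerlt ρ ν.2)
  calc #{v : Set Ordinal.{0} // v ⊆ Set.Iio γ ∧ #v < Cardinal.lift.{1} κ}
      ≤ #(Σ ν : ↥(Set.Iio κ), {v : Set Ordinal.{0} // v ⊆ Set.Iio γ ∧ #v ≤ Cardinal.lift.{1} ν.1}) :=
        Cardinal.mk_le_of_injective hinj
    _ = Cardinal.sum (fun ν : ↥(Set.Iio κ) =>
        #{v : Set Ordinal.{0} // v ⊆ Set.Iio γ ∧ #v ≤ Cardinal.lift.{1} ν.1}) := Cardinal.mk_sigma _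
    _ ≤ Cardinal.sum (fun _ : ↥(Set.Iio κ) => Cardinal.lift.{1} (ρ ^< κ)) :=
        Cardinal.sum_le_sum _ _ h3
    _ = #(↥(Set.Iio κ)) * Cardinal.lift.{1} (ρ ^< κ) := Cardinal.sum_const' _ _
    _ ≤ Cardinal.lift.{1} κ * Cardinal.lift.{1} (ρ ^< κ) := mul_le_mul_left hIio _
    _ = Cardinal.lift.{1} (κ * (ρ ^< κ)) := (Cardinal.lift_mul _ _).symm

/-- Lemma 4.1: given `σ < κ ≤ μ < λ` with `κ, λ` regular,
`|α|^{<κ} < λ` for `α < λ`, a colouring `τ` of pairs from `λ` by `σ`, a stationary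
`U ⊆ {α < λ : cf(α) ≥ κ}`, a prediction `τ₁ : U → σ` and witnessing ordinals
`β_{v,ξ}`, there are a club `E` of `λ` and `τ₂ : U ∩ E → σ` such that below any
`δ ∈ U ∩ E` one finds `β` realizing `τ₁` on `v` and `τ₂` at `δ`. -/
theorem club_guessing_colour
    (σ κ μ lam : Cardinal.{0})
    (hσ : ℵ₀ ≤ σ) (hσκ : σ < κ) (hκμ : κ ≤ μ) (hμlam : μ < lam)
    (hκreg : κ.IsRegular) (hlamreg : lam.IsRegular)
    (hsmall : ∀ α < lam.ord, α.card ^< κ < lam)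
    (tau : Ordinal → Ordinal → Ordinal)
    (htau : ∀ α < lam.ord, ∀ β < lam.ord, tau α β < σ.ord)
    (U : Set Ordinal) (hU1 : U ⊆ {α | α < lam.ord ∧ κ ≤ α.cof})
    (hU2 : IsStationaryIn lam.ord U)
    (tau1 : Ordinal → Ordinal) (htau1 : ∀ α ∈ U, tau1 α < σ.ord)
    (B : Set Ordinal → Ordinal → Ordinal)
    (hB1 : ∀ v : Set Ordinal, v ⊆ U → #v < Cardinal.lift.{1} κ → ∀ ξ < μ.ord,
      sSup v < B v ξ ∧ B v ξ < lam.ord)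
    (hB2 : ∀ v : Set Ordinal, v ⊆ U → #v < Cardinal.lift.{1} κ →
      ∃ ξ < μ.ord, ∀ α ∈ v, tau α (B v ξ) = tau1 α) :
    ∃ E : Set Ordinal, IsClubIn lam.ord E ∧
      ∃ tau2 : Ordinal → Ordinal, (∀ δ ∈ U ∩ E, tau2 δ < σ.ord) ∧
        ∀ v : Set Ordinal, v ⊆ U → #v < Cardinal.lift.{1} κ →
          ∀ δ ∈ U ∩ E, sSup v < δ →
            ∃ β, sSup v < β ∧ β < δ ∧ (∀ α ∈ v, tau α β = tau1 α) ∧ tau β δ = tau2 δ := by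
  classical
  have hℵκ : ℵ₀ ≤ κ := hσ.trans hσκ.le
  have hκlam : κ < lam := lt_of_le_of_lt hκμ hμlam
  have hℵlam : ℵ₀ < lam := lt_of_le_of_lt hℵκ hκlam
  have hUsub : U ⊆ Set.Iio lam.ord := fun α hα => (hU1 hα).1
  have hlimlam : Order.IsSuccLimit lam.ord := Cardinal.isSuccLimit_ord hlamreg.1
  have hcoflam : (lam.ord).cof = lam := hlamreg.cof_eq
  -- the sup function
  let Q : Ordinal → Type 1 := fun γ =>
    {v : Set Ordinal.{0} // v ⊆ Set.Iio γ ∧ #v < Cardinal.lift.{1} κ}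
  let g : ∀ γ : Ordinal, Q γ × ↥(Set.Iio μ.ord) → Ordinal := fun γ p =>
    if p.1.1 ⊆ U then B p.1.1 p.2.1 else 0
  let F : Ordinal → Ordinal := fun γ => sSup (Set.range (g γ))
  have hglt : ∀ γ, ∀ p : Q γ × ↥(Set.Iio μ.ord), g γ p < lam.ord := by
    intro γ p
    by_cases h : p.1.1 ⊆ U
    · simp only [g, if_pos h]
      exact (hB1 p.1.1 h p.1.2.2 p.2.1 p.2.2).2
    · simp only [g, if_neg h]
      exact hlimlam.pos
  have hgbdd : ∀ γ, BddAbove (Set.range (g γ)) := by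
    intro γ
    refine ⟨lam.ord, ?_⟩
    rintro x ⟨p, rfl⟩
    exact (hglt γ p).le
  have hFlt : ∀ γ < lam.ord, F γ < lam.ord := by
    intro γ hγ
    apply mySSup_lt_of_card_lt_cof
    · rintro x ⟨p, rfl⟩; exact hglt γ p
    · rw [hcoflam]
      refine lt_of_le_of_lt Cardinal.mk_range_le ?_
      have hq : #(Q γ) ≤ Cardinal.lift.{1} (κ * ((γ.card ⊔ ℵ₀) ^< κ)) := myMk_small_subsets_le γ κ
      have hμ' : #(↥(Set.Iio μ.ord)) = Cardinal.lift.{1} μ := by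
        rw [Ordinal.mk_Iio_ordinal, Cardinal.card_ord]
      have hprod : #(Q γ × ↥(Set.Iio μ.ord)) = #(Q γ) * #(↥(Set.Iio μ.ord)) := by
        simp [Cardinal.mk_prod]
      rw [hprod, hμ']
      have h1 : (γ.card ⊔ ℵ₀) ^< κ < lam := by
        have hωlam : (Ordinal.omega0 : Ordinal) < lam.ord := by
          rw [Cardinal.lt_ord, Ordinal.card_omega0]; exact hℵlam
        have hγω : γ ⊔ Ordinal.omega0 < lam.ord := max_lt hγ hωlam
        have hle : γ.card ⊔ ℵ₀ ≤ (γ ⊔ Ordinal.omega0).card := by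
          apply max_le
          · exact Ordinal.card_le_card (le_max_left _ _)
          · simpa using Ordinal.card_le_card (le_max_right γ Ordinal.omega0)
        calc (γ.card ⊔ ℵ₀) ^< κ ≤ ((γ ⊔ Ordinal.omega0).card) ^< κ := by
              apply Cardinal.powerlt_le.2
              intro x hx
              exact (Cardinal.power_le_power_right hle).trans (Cardinal.le_powerlt _ hx)
          _ < lam := hsmall _ hγω
      have hbig : κ * ((γ.card ⊔ ℵ₀) ^< κ) < lam := Cardinal.mul_lt_of_lt hlamreg.1 hκlam h1
      calc #(Q γ) * Cardinal.lift.{1} μ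
          ≤ Cardinal.lift.{1} (κ * ((γ.card ⊔ ℵ₀) ^< κ)) * Cardinal.lift.{1} μ :=
            mul_le_mul_left hq _
        _ = Cardinal.lift.{1} ((κ * ((γ.card ⊔ ℵ₀) ^< κ)) * μ) := (Cardinal.lift_mul _ _).symm
        _ < Cardinal.lift.{1} lam :=
            Cardinal.lift_lt.2 (Cardinal.mul_lt_of_lt hlamreg.1 hbig hμlam)
  have hFkey : ∀ γ, ∀ v : Set Ordinal, v ⊆ U → #v < Cardinal.lift.{1} κ → v ⊆ Set.Iio γ →
      ∀ ξ < μ.ord, B v ξ ≤ F γ := by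
    intro γ v hvU hvκ hvγ ξ hξ
    have hmem : B v ξ ∈ Set.range (g γ) := by
      refine ⟨⟨⟨v, hvγ, hvκ⟩, ⟨ξ, hξ⟩⟩, ?_⟩
      simp only [g, if_pos hvU]
    exact le_csSup (hgbdd γ) hmem
  have hFmono : ∀ {γ γ' : Ordinal}, γ ≤ γ' → F γ ≤ F γ' := by
    intro γ γ' h
    apply csSup_le_csSup' (hgbdd γ')
    rintro x ⟨⟨⟨v, hv1, hv2⟩, ξ⟩, rfl⟩
    exact ⟨⟨⟨v, fun a ha => lt_of_lt_of_le (hv1 ha) h, hv2⟩, ξ⟩, rfl⟩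
  -- the club
  let E : Set Ordinal := {β | β < lam.ord ∧ 0 < β ∧ ∀ γ < β, F γ < β}
  have hEclub : IsClubIn lam.ord E := by
    refine ⟨fun β hβ => hβ.1, ?_, ?_⟩
    · intro s hs hne hlt
      have hsub : s ⊆ Set.Iio lam.ord := fun x hx => (hs hx).1
      have hbdd : BddAbove s := BddAbove.mono hsub bddAbove_Iio
      refine ⟨hlt, ?_, ?_⟩
      · obtain ⟨b, hb⟩ := hne
        exact lt_of_lt_of_le (hs hb).2.1 (le_csSup hbdd hb)
      · intro γ hγ
        obtain ⟨b, hb, hγb⟩ := (lt_csSup_iff hbdd hne).1 hγ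
        exact lt_of_lt_of_le ((hs hb).2.2 γ hγb) (le_csSup hbdd hb)
    · intro a ha
      let seq : ℕ → Ordinal := fun n => Nat.rec (a + 1) (fun _ ih => (F ih ⊔ ih) + 1) n
      have hseqlt : ∀ n, seq n < lam.ord := by
        intro n
        induction n with
        | zero =>
          show a + 1 < lam.ord
          rw [Ordinal.add_one_eq_succ]
          exact hlimlam.succ_lt ha
        | succ n ih =>
          show (F (seq n) ⊔ seq n) + 1 < lam.ord
          rw [Ordinal.add_one_eq_succ]
          exact hlimlam.succ_lt (max_lt (hFlt _ ih) ih)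
      have hbddr : BddAbove (Set.range seq) := Ordinal.bddAbove_of_small
      have hseqle : ∀ n, seq n ≤ ⨆ n, seq n := fun n => le_ciSup hbddr n
      have hβlt : (⨆ n, seq n) < lam.ord := by
        apply Ordinal.iSup_lt_ord _ hseqlt
        rw [hcoflam, Cardinal.mk_nat]
        exact hℵlam
      refine ⟨⨆ n, seq n, ⟨hβlt, ?_, ?_⟩, ?_⟩
      · refine lt_of_lt_of_le ?_ (hseqle 0)
        show (0 : Ordinal) < a + 1
        rw [Ordinal.add_one_eq_succ]
        exact (zero_le (a := a)).trans_lt (Order.lt_succ a)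
      · intro γ hγ
        obtain ⟨n, hn⟩ := Ordinal.lt_iSup_iff.1 hγ
        calc F γ ≤ F (seq n) := hFmono hn.le
          _ < (F (seq n) ⊔ seq n) + 1 := by
              rw [Ordinal.add_one_eq_succ]
              exact (le_max_left _ _).trans_lt (Order.lt_succ _)
          _ = seq (n + 1) := rfl
          _ ≤ ⨆ n, seq n := hseqle (n + 1)
      · refine lt_of_lt_of_le ?_ (hseqle 0)
        show a < a + 1
        rw [Ordinal.add_one_eq_succ]
        exact Order.lt_succ a
  have hKey : ∀ δ, δ ∈ U → δ ∈ E → ∀ v : Set Ordinal, v ⊆ U → #v < Cardinal.lift.{1} κ →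
      sSup v < δ → ∀ ξ < μ.ord, B v ξ < δ := by
    intro δ hδU hδE v hvU hvκ hsup ξ hξ
    have hδlim : Order.IsSuccLimit δ := Ordinal.aleph0_le_cof.1 (hℵκ.trans (hU1 hδU).2)
    have hγδ : sSup v + 1 < δ := by
      rw [Ordinal.add_one_eq_succ]; exact hδlim.succ_lt hsup
    have hbv : BddAbove v := BddAbove.mono (fun x hx => hUsub (hvU hx)) bddAbove_Iio
    have hvsub : v ⊆ Set.Iio (sSup v + 1) := by
      intro α hα
      refine lt_of_le_of_lt (le_csSup hbv hα) ?_
      rw [Ordinal.add_one_eq_succ]; exact Order.lt_succ _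
    exact lt_of_le_of_lt (hFkey _ v hvU hvκ hvsub ξ hξ) (hδE.2.2 _ hγδ)
  -- lift κ is regular
  have hliftreg : (Cardinal.lift.{1} κ).IsRegular := by
    constructor
    · exact Cardinal.aleph0_le_lift.2 hκreg.1
    · rw [← Cardinal.lift_ord, ← Ordinal.lift_cof]
      exact Cardinal.lift_le.2 hκreg.2
  have hclaim : ∀ δ, δ ∈ U → δ ∈ E → ∃ c, c < σ.ord ∧
      ∀ v : Set Ordinal, v ⊆ U → #v < Cardinal.lift.{1} κ → sSup v < δ →
        ∃ β, sSup v < β ∧ β < δ ∧ (∀ α ∈ v, tau α β = tau1 α) ∧ tau β δ = c := by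
    intro δ hδU hδE
    by_contra hcon
    push_neg at hcon
    choose vc hvc1 hvc2 hvc3 hvc4 using hcon
    let vstar : Set Ordinal := ⋃ p : ↥(Set.Iio σ.ord), vc p.1 p.2
    have hsub : ∀ p : ↥(Set.Iio σ.ord), vc p.1 p.2 ⊆ vstar :=
      fun p => Set.subset_iUnion (fun p : ↥(Set.Iio σ.ord) => vc p.1 p.2) p
    have hvU : vstar ⊆ U := Set.iUnion_subset fun p => hvc1 p.1 p.2
    have hvκ : #(↥vstar) < Cardinal.lift.{1} κ := by
      refine lt_of_le_of_lt Cardinal.mk_iUnion_le_sum_mk ?_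
      refine Cardinal.sum_lt_of_isRegular hliftreg ?_ (fun p => hvc2 p.1 p.2)
      rw [Ordinal.mk_Iio_ordinal, Cardinal.card_ord]
      exact Cardinal.lift_lt.2 hσκ
    have hbv : BddAbove vstar := BddAbove.mono (fun x hx => hUsub (hvU hx)) bddAbove_Iio
    have hvδ : vstar ⊆ Set.Iio δ := by
      intro x hx
      obtain ⟨p, hxs⟩ := Set.mem_iUnion.1 hx
      exact lt_of_le_of_lt (le_csSup (hbv.mono (hsub p)) hxs) (hvc3 p.1 p.2)
    have hsupv : sSup vstar < δ := by
      refine mySSup_lt_of_card_lt_cof (fun x hx => hvδ hx) ?_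
      exact lt_of_lt_of_le hvκ (Cardinal.lift_le.2 (hU1 hδU).2)
    obtain ⟨ξ, hξμ, hξ⟩ := hB2 vstar hvU hvκ
    obtain ⟨hβ1, hβ2⟩ := hB1 vstar hvU hvκ ξ hξμ
    have hβδ : B vstar ξ < δ := hKey δ hδU hδE vstar hvU hvκ hsupv ξ hξμ
    have hc : tau (B vstar ξ) δ < σ.ord := htau _ hβ2 _ hδE.1
    refine hvc4 _ hc (B vstar ξ) ?_ hβδ ?_ rfl
    · exact lt_of_le_of_lt (csSup_le_csSup' hbv (hsub ⟨_, hc⟩)) hβ1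
    · intro α hα; exact hξ α (hsub ⟨_, hc⟩ hα)
  let tau2 : Ordinal → Ordinal := fun δ =>
    if h : δ ∈ U ∧ δ ∈ E then (hclaim δ h.1 h.2).choose else 0
  refine ⟨E, hEclub, tau2, ?_, ?_⟩
  · intro δ hδ
    have h : δ ∈ U ∧ δ ∈ E := ⟨hδ.1, hδ.2⟩
    simp only [tau2, dif_pos h]
    exact (hclaim δ h.1 h.2).choose_spec.1
  · intro v hvU hvκ δ hδ hsupv
    have h : δ ∈ U ∧ δ ∈ E := ⟨hδ.1, hδ.2⟩
    obtain ⟨β, h1, h2, h3, h4⟩ := (hclaim δ h.1 h.2).choose_spec.2 v hvU hvκ hsupv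
    refine ⟨β, h1, h2, h3, ?_⟩
    simp only [tau2, dif_pos h]
    exact h4
end
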